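/- arXiv:1205.6733 — 9 statements merged into one kernel-verified Lean document; each statement's English description precedes it below -/
import Mathlib

section
/- In the tree model, let the propagator be defined by q_{k-1,k}(f) = g_{k-1,k}·K_k(f)/μ_{k-1}(g_{k-1,k}) and composition q_{j,k}(f) = q_{j,j+1}(q_{j+1,j+2}(…q_{k-1,k}(f))). Then for all 0 ≤ j < k ≤ n, every f : I_k → ℝ and every x ∈ I_j one has q_{j,k}(f)(x) = μ_k(f·1_{s_k(x)})/μ_j(x). In particular |q_{j,k}(f)(x)| ≤ (max_{y∈I_k}|f(y)|)·q_{j,k}(1)(x) ≤ (max_{y∈I_k}|f(y)|)·(max_{z∈I_j} μ_k^{→j}(z)/μ_j(z)). -/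
/- Sequential MCMC on trees: explicit formula for the Feynman-Kac propagator
   (Lemma 3.1 of the paper). -/
theorem stmt_0
    (n : ℕ) (I : ℕ → Type)
    [∀ k, Fintype (I k)] [∀ k, Nonempty (I k)] [∀ k, DecidableEq (I k)]
    (μ : ∀ k, I k → ℝ)
    (hμpos : ∀ k, k ≤ n → ∀ x, 0 < μ k x)
    (hμsum : ∀ k, k ≤ n → ∑ x, μ k x = 1)
    -- predecessor maps (meaningful for j < k) and their transitivity
    (p : ∀ j k : ℕ, I k → I j)
    (htrans : ∀ j k l : ℕ, j < k → k < l → l ≤ n → ∀ x : I l, p j l x = p j k (p k l x))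
    -- no branch dies out: successor sets are nonempty
    (hsucc : ∀ k l : ℕ, k < l → l ≤ n → ∀ x : I k, ∃ y : I l, p k l y = x)
    -- unnormalized relative density between μ_k and the projection of μ_{k+1} to I_k
    (g : ∀ k, I k → ℝ)
    (hgpos : ∀ k, k < n → ∀ x, 0 < g k x)
    (hgdens : ∀ k, k < n → ∀ x : I k,
      (∑ y : I (k+1), if p k (k+1) y = x then μ (k+1) y else 0)
        = g k x * μ k x / (∑ z, g k z * μ k z))
    -- the Markov transition kernel K_{k+1}
    (K : ∀ k, I k → I (k+1) → ℝ)
    (hK : ∀ k, k < n → ∀ (x : I k) (y : I (k+1)),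
      K k x y = if p k (k+1) y = x
        then μ (k+1) y / (∑ y' : I (k+1), if p k (k+1) y' = x then μ (k+1) y' else 0)
        else 0)
    -- the Feynman-Kac propagator q_{j,k}:
    -- q_{k,k}(f) = f,  q_{j,k}(f) = q_{j,j+1}(q_{j+1,k}(f)) with
    -- q_{j,j+1}(h) = g_{j,j+1}·K_{j+1}(h)/μ_j(g_{j,j+1})
    (q : ∀ j k : ℕ, (I k → ℝ) → I j → ℝ)
    (hqdiag : ∀ (k : ℕ) (f : I k → ℝ), q k k f = f)
    (hqstep : ∀ j k : ℕ, j < k → k ≤ n → ∀ (f : I k → ℝ) (x : I j),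
      q j k f x = g j x * (∑ y : I (j+1), K j x y * q (j+1) k f y)
                    / (∑ z, μ j z * g j z)) :
    ∀ j k : ℕ, j < k → k ≤ n → ∀ (f : I k → ℝ) (x : I j),
      q j k f x = (∑ y : I k, if p j k y = x then f y * μ k y else 0) / μ j x
      ∧ |q j k f x|
          ≤ (Finset.univ.sup' Finset.univ_nonempty fun y : I k => |f y|)
              * q j k (fun _ => (1:ℝ)) x
      ∧ (Finset.univ.sup' Finset.univ_nonempty fun y : I k => |f y|)
              * q j k (fun _ => (1:ℝ)) x
          ≤ (Finset.univ.sup' Finset.univ_nonempty fun y : I k => |f y|)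
              * (Finset.univ.sup' Finset.univ_nonempty fun z : I j =>
                  (∑ y : I k, if p j k y = z then μ k y else 0) / μ j z) := by

  -- Main formula by induction on the gap d = k - j - 1.
  have key : ∀ d : ℕ, ∀ j k : ℕ, k = j + d + 1 → k ≤ n → ∀ (f : I k → ℝ) (x : I j),
      q j k f x = (∑ y : I k, if p j k y = x then f y * μ k y else 0) / μ j x := by
    intro d
    induction d with
    | zero =>
      intro j k hk hkn f x
      subst hk
      have hjn : j < n := by omega
      have hG : (0:ℝ) < ∑ z, g j z * μ j z :=
        Finset.sum_pos (fun z _ => mul_pos (hgpos j hjn z) (hμpos j (by omega) z))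
          Finset.univ_nonempty
      have hgd := hgdens j hjn x
      have hsum : (∑ y : I (j+1), K j x y * q (j+1) (j+1) f y)
          = (∑ y : I (j+1), if p j (j+1) y = x then f y * μ (j+1) y else 0)
              / (∑ y' : I (j+1), if p j (j+1) y' = x then μ (j+1) y' else 0) := by
        rw [Finset.sum_div]
        refine Finset.sum_congr rfl fun y _ => ?_
        rw [hK j hjn x y, hqdiag]
        split_ifs with h
        · ring
        · simp
      rw [hqstep j (j+1) (by omega) hkn, hsum, hgd]
      rw [show (∑ z, μ j z * g j z) = ∑ z, g j z * μ j z from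
        Finset.sum_congr rfl fun z _ => mul_comm _ _]
      have hgx := hgpos j hjn x
      have hmx := hμpos j (by omega) x
      field_simp
    | succ d ih =>
      intro j k hk hkn f x
      have hjn : j < n := by omega
      have hG : (0:ℝ) < ∑ z, g j z * μ j z :=
        Finset.sum_pos (fun z _ => mul_pos (hgpos j hjn z) (hμpos j (by omega) z))
          Finset.univ_nonempty
      have hgd := hgdens j hjn x
      have hih : ∀ y : I (j+1), q (j+1) k f y
          = (∑ z : I k, if p (j+1) k z = y then f z * μ k z else 0) / μ (j+1) y :=
        fun y => ih (j+1) k (by omega) hkn f y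
      have hswap : (∑ y : I (j+1), if p j (j+1) y = x then
            (∑ z : I k, if p (j+1) k z = y then f z * μ k z else 0) else 0)
          = ∑ z : I k, if p j k z = x then f z * μ k z else 0 := by
        calc (∑ y : I (j+1), if p j (j+1) y = x then
              (∑ z : I k, if p (j+1) k z = y then f z * μ k z else 0) else 0)
            = ∑ y : I (j+1), ∑ z : I k,
                if p (j+1) k z = y ∧ p j (j+1) y = x then f z * μ k z else 0 := by
              refine Finset.sum_congr rfl fun y _ => ?_
              split_ifs with h
              · exact Finset.sum_congr rfl fun z _ => by simp [h]
              · simp [h]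
          _ = ∑ z : I k, ∑ y : I (j+1),
                if p (j+1) k z = y ∧ p j (j+1) y = x then f z * μ k z else 0 :=
              Finset.sum_comm
          _ = ∑ z : I k, if p j k z = x then f z * μ k z else 0 := by
              refine Finset.sum_congr rfl fun z _ => ?_
              rw [Finset.sum_eq_single (p (j+1) k z)]
              · rw [htrans j (j+1) k (by omega) (by omega) hkn z]
                simp
              · intro y _ hy
                exact if_neg fun h => hy h.1.symm
              · simp
      have hsum : (∑ y : I (j+1), K j x y * q (j+1) k f y)
          = (∑ z : I k, if p j k z = x then f z * μ k z else 0)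
              / (∑ y' : I (j+1), if p j (j+1) y' = x then μ (j+1) y' else 0) := by
        rw [← hswap, Finset.sum_div]
        refine Finset.sum_congr rfl fun y _ => ?_
        rw [hK j hjn x y, hih y]
        have hmy : μ (j+1) y ≠ 0 := ne_of_gt (hμpos (j+1) (by omega) y)
        split_ifs with h
        · rw [div_mul_div_comm,
            mul_comm (∑ y' : I (j+1), if p j (j+1) y' = x then μ (j+1) y' else 0) (μ (j+1) y),
            mul_div_mul_left _ _ hmy]
        · simp
      rw [hqstep j k (by omega) hkn, hsum, hgd]
      rw [show (∑ z, μ j z * g j z) = ∑ z, g j z * μ j z from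
        Finset.sum_congr rfl fun z _ => mul_comm _ _]
      have hgx := hgpos j hjn x
      have hmx := hμpos j (by omega) x
      field_simp
  intro j k hjk hkn f x
  have hmx := hμpos j (by omega) x
  have hqf := key (k - j - 1) j k (by omega) hkn f x
  have hq1 := key (k - j - 1) j k (by omega) hkn (fun _ => (1:ℝ)) x
  simp only [one_mul] at hq1
  set M : ℝ := Finset.univ.sup' Finset.univ_nonempty fun y : I k => |f y| with hM
  have hM0 : 0 ≤ M := le_trans (abs_nonneg _)
    (Finset.le_sup' (fun y : I k => |f y|) (Finset.mem_univ (Classical.arbitrary (I k))))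
  have hMf : ∀ y : I k, |f y| ≤ M :=
    fun y => Finset.le_sup' (fun y : I k => |f y|) (Finset.mem_univ y)
  refine ⟨hqf, ?_, ?_⟩
  · rw [hqf, hq1, abs_div, abs_of_pos hmx, ← mul_div_assoc]
    gcongr
    calc |∑ y : I k, if p j k y = x then f y * μ k y else 0|
        ≤ ∑ y : I k, |if p j k y = x then f y * μ k y else 0| :=
          Finset.abs_sum_le_sum_abs _ _
      _ ≤ M * (∑ y : I k, if p j k y = x then μ k y else 0) := by
          rw [Finset.mul_sum]
          refine Finset.sum_le_sum fun y _ => ?_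
          split_ifs with h
          · rw [abs_mul, abs_of_pos (hμpos k hkn y)]
            exact mul_le_mul_of_nonneg_right (hMf y) (le_of_lt (hμpos k hkn y))
          · simp [hM0.trans (le_abs_self M), mul_nonneg hM0]
  · rw [hq1]
    refine mul_le_mul_of_nonneg_left ?_ hM0
    exact Finset.le_sup'
      (fun z : I j => (∑ y : I k, if p j k y = z then μ k y else 0) / μ j z)
      (Finset.mem_univ x)
end

section
/- In the tree model, set d_{j,k} = (max_{x∈I_j} μ_k^{→j}(x)/μ_j(x))² for 0 ≤ j < k ≤ n. Then for every f : I_k → ℝ one has max( ‖q_{j,k}(f)²‖_j , ‖q_{j,k}(f)‖_j² ) ≤ d_{j,k}·‖f‖_k², and moreover Var_{μ_j}(q_{j,k}(f)) ≤ √(d_{j,k})·‖f‖_k². Consequently sup{ Σ_{j=0}^k Var_{μ_j}(q_{j,k}(f)) : ‖f‖_k ≤ 1 } ≤ Σ_{j=0}^k √(d_{j,k}) (with d_{k,k}:=1). -/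
/- Sequential MCMC on trees: the constants d_{j,k} satisfy the stability
   inequality, the variance bound, and bound the asymptotic variance
   (Proposition 3.3 of the paper). -/
theorem stmt_1
    (n : ℕ) (I : ℕ → Type)
    [∀ k, Fintype (I k)] [∀ k, Nonempty (I k)] [∀ k, DecidableEq (I k)]
    (μ : ∀ k, I k → ℝ)
    (hμpos : ∀ k, k ≤ n → ∀ x, 0 < μ k x)
    (hμsum : ∀ k, k ≤ n → ∑ x, μ k x = 1)
    (p : ∀ j k : ℕ, I k → I j)
    (htrans : ∀ j k l : ℕ, j < k → k < l → l ≤ n → ∀ x : I l, p j l x = p j k (p k l x))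
    (hsucc : ∀ k l : ℕ, k < l → l ≤ n → ∀ x : I k, ∃ y : I l, p k l y = x)
    -- projection μ_k^{→j} of μ_k to I_j
    (proj : ∀ j k : ℕ, I j → ℝ)
    (hproj : ∀ (j k : ℕ) (x : I j), proj j k x = ∑ y : I k, if p j k y = x then μ k y else 0)
    -- Feynman-Kac propagator: q_{j,k}(f)(x) = μ_k(f·1_{s_k(x)})/μ_j(x) for j<k, q_{k,k}(f)=f
    (q : ∀ j k : ℕ, (I k → ℝ) → I j → ℝ)
    (hq : ∀ (j k : ℕ), j < k → ∀ (f : I k → ℝ) (x : I j),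
      q j k f x = (∑ y : I k, if p j k y = x then f y * μ k y else 0) / μ j x)
    (hqdiag : ∀ (k : ℕ) (f : I k → ℝ), q k k f = f)
    -- the constants d_{j,k}
    (d : ℕ → ℕ → ℝ)
    (hd : ∀ j k : ℕ, j < k →
      d j k = (Finset.univ.sup' Finset.univ_nonempty fun x : I j => proj j k x / μ j x)^2) :
    (∀ j k : ℕ, j < k → k ≤ n → ∀ f : I k → ℝ,
      max (Finset.univ.sup' Finset.univ_nonempty fun x : I j => |(q j k f x)^2|)
          ((Finset.univ.sup' Finset.univ_nonempty fun x : I j => |q j k f x|)^2)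
        ≤ d j k * (Finset.univ.sup' Finset.univ_nonempty fun y : I k => |f y|)^2
      ∧ (∑ x : I j, μ j x * (q j k f x)^2) - (∑ x : I j, μ j x * q j k f x)^2
          ≤ Real.sqrt (d j k)
            * (Finset.univ.sup' Finset.univ_nonempty fun y : I k => |f y|)^2)
    ∧ (∀ k : ℕ, k ≤ n → ∀ f : I k → ℝ,
        (Finset.univ.sup' Finset.univ_nonempty fun y : I k => |f y|) ≤ 1 →
        (∑ j ∈ Finset.range k,
            ((∑ x : I j, μ j x * (q j k f x)^2) - (∑ x : I j, μ j x * q j k f x)^2))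
          + ((∑ x : I k, μ k x * (f x)^2) - (∑ x : I k, μ k x * f x)^2)
        ≤ (∑ j ∈ Finset.range k, Real.sqrt (d j k)) + 1) := by
  have main : ∀ j k : ℕ, j < k → k ≤ n → ∀ f : I k → ℝ,
      max (Finset.univ.sup' Finset.univ_nonempty fun x : I j => |(q j k f x)^2|)
          ((Finset.univ.sup' Finset.univ_nonempty fun x : I j => |q j k f x|)^2)
        ≤ d j k * (Finset.univ.sup' Finset.univ_nonempty fun y : I k => |f y|)^2
      ∧ (∑ x : I j, μ j x * (q j k f x)^2) - (∑ x : I j, μ j x * q j k f x)^2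
          ≤ Real.sqrt (d j k)
            * (Finset.univ.sup' Finset.univ_nonempty fun y : I k => |f y|)^2 := by
    intro j k hjk hkn f
    set Nf := Finset.univ.sup' Finset.univ_nonempty fun y : I k => |f y| with hNfdef
    set M := Finset.univ.sup' Finset.univ_nonempty fun x : I j => proj j k x / μ j x with hMdef
    have hjn : j ≤ n := le_trans hjk.le hkn
    have hμj : ∀ x, 0 < μ j x := hμpos j hjn
    have hfb : ∀ y, |f y| ≤ Nf := fun y => Finset.le_sup' (fun y : I k => |f y|) (Finset.mem_univ y)
    have hNf0 : 0 ≤ Nf :=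
      le_trans (abs_nonneg (f (Classical.arbitrary (I k)))) (hfb _)
    have hprojnn : ∀ x : I j, 0 ≤ proj j k x := by
      intro x
      rw [hproj]
      apply Finset.sum_nonneg
      intro y _
      split_ifs
      · exact (hμpos k hkn y).le
      · exact le_refl 0
    have hprojsum : (∑ x : I j, proj j k x) = 1 := by
      have : (∑ x : I j, proj j k x)
          = ∑ y : I k, ∑ x : I j, (if p j k y = x then μ k y else 0) := by
        simp only [hproj]
        rw [Finset.sum_comm]
      rw [this]
      simp only [Finset.sum_ite_eq, Finset.mem_univ, if_true]
      exact hμsum k hkn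
    have hMb : ∀ x : I j, proj j k x / μ j x ≤ M :=
      fun x => Finset.le_sup' (fun x : I j => proj j k x / μ j x) (Finset.mem_univ x)
    have hM0 : 0 ≤ M := by
      have x := Classical.arbitrary (I j)
      exact le_trans (div_nonneg (hprojnn x) (hμj x).le) (hMb x)
    have hd' : d j k = M ^ 2 := hd j k hjk
    have hsqrt : Real.sqrt (d j k) = M := by
      rw [hd', Real.sqrt_sq hM0]
    have hq1 : ∀ x : I j, |q j k f x| ≤ Nf * (proj j k x / μ j x) := by
      intro x
      have h1 : |∑ y : I k, if p j k y = x then f y * μ k y else 0|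
          ≤ Nf * proj j k x := by
        refine (Finset.abs_sum_le_sum_abs _ _).trans ?_
        rw [hproj, Finset.mul_sum]
        apply Finset.sum_le_sum
        intro y _
        split_ifs with h
        · rw [abs_mul, abs_of_pos (hμpos k hkn y)]
          exact mul_le_mul_of_nonneg_right (hfb y) (hμpos k hkn y).le
        · simp
      rw [hq j k hjk, abs_div, abs_of_pos (hμj x), mul_div_assoc']
      exact (div_le_div_iff_of_pos_right (hμj x)).mpr h1
    have hq2 : ∀ x : I j, |q j k f x| ≤ M * Nf := by
      intro x
      calc |q j k f x| ≤ Nf * (proj j k x / μ j x) := hq1 x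
        _ ≤ Nf * M := mul_le_mul_of_nonneg_left (hMb x) hNf0
        _ = M * Nf := mul_comm _ _
    constructor
    · apply max_le
      · apply Finset.sup'_le
        intro x _
        have : |(q j k f x) ^ 2| = |q j k f x| ^ 2 := by
          rw [sq_abs, abs_of_nonneg (sq_nonneg _)]
        rw [this, hd']
        calc |q j k f x| ^ 2 ≤ (M * Nf) ^ 2 :=
              pow_le_pow_left₀ (abs_nonneg _) (hq2 x) 2
          _ = M ^ 2 * Nf ^ 2 := by ring
      · have hsup : (Finset.univ.sup' Finset.univ_nonempty fun x : I j => |q j k f x|)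
            ≤ M * Nf := Finset.sup'_le _ _ fun x _ => hq2 x
        have hsup0 : 0 ≤ Finset.univ.sup' Finset.univ_nonempty fun x : I j => |q j k f x| :=
          le_trans (abs_nonneg _) (Finset.le_sup' (fun x : I j => |q j k f x|) (Finset.mem_univ (Classical.arbitrary (I j))))
        rw [hd']
        calc (Finset.univ.sup' Finset.univ_nonempty fun x : I j => |q j k f x|) ^ 2
            ≤ (M * Nf) ^ 2 := pow_le_pow_left₀ hsup0 hsup 2
          _ = M ^ 2 * Nf ^ 2 := by ring
    · have hterm : ∀ x : I j, μ j x * (q j k f x) ^ 2 ≤ M * Nf ^ 2 * proj j k x := by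
        intro x
        have ha := hq1 x
        have hb := hq2 x
        have habs : 0 ≤ |q j k f x| := abs_nonneg _
        have hsq : (q j k f x) ^ 2 = |q j k f x| ^ 2 := (sq_abs _).symm
        have h2 : (q j k f x) ^ 2 ≤ (M * Nf) * (Nf * (proj j k x / μ j x)) := by
          nlinarith [mul_nonneg (sub_nonneg.mpr ha) (sub_nonneg.mpr hb)]
        have hne := (hμj x).ne'
        calc μ j x * (q j k f x) ^ 2
            ≤ μ j x * ((M * Nf) * (Nf * (proj j k x / μ j x))) :=
              mul_le_mul_of_nonneg_left h2 (hμj x).le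
          _ = M * Nf ^ 2 * proj j k x := by field_simp
      have hsum : (∑ x : I j, μ j x * (q j k f x) ^ 2) ≤ M * Nf ^ 2 := by
        calc (∑ x : I j, μ j x * (q j k f x) ^ 2)
            ≤ ∑ x : I j, M * Nf ^ 2 * proj j k x :=
              Finset.sum_le_sum fun x _ => hterm x
          _ = M * Nf ^ 2 * ∑ x : I j, proj j k x := by rw [← Finset.mul_sum]
          _ = M * Nf ^ 2 := by rw [hprojsum, mul_one]
      rw [hsqrt]
      nlinarith [sq_nonneg (∑ x : I j, μ j x * q j k f x)]
  refine ⟨main, ?_⟩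
  intro k hkn f hf1
  set Nf := Finset.univ.sup' Finset.univ_nonempty fun y : I k => |f y| with hNfdef
  have hfb : ∀ y, |f y| ≤ Nf := fun y => Finset.le_sup' (fun y : I k => |f y|) (Finset.mem_univ y)
  have hNf0 : 0 ≤ Nf :=
    le_trans (abs_nonneg (f (Classical.arbitrary (I k)))) (hfb _)
  have hNfsq : Nf ^ 2 ≤ 1 := by nlinarith
  have hdiag : (∑ x : I k, μ k x * (f x) ^ 2) - (∑ x : I k, μ k x * f x) ^ 2 ≤ 1 := by
    have h1 : (∑ x : I k, μ k x * (f x) ^ 2) ≤ 1 := by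
      calc (∑ x : I k, μ k x * (f x) ^ 2) ≤ ∑ x : I k, μ k x := by
            apply Finset.sum_le_sum
            intro x _
            have : (f x) ^ 2 ≤ 1 := by
              have := hfb x
              nlinarith [abs_nonneg (f x), sq_abs (f x)]
            nlinarith [(hμpos k hkn x).le]
        _ = 1 := hμsum k hkn
    nlinarith [sq_nonneg (∑ x : I k, μ k x * f x)]
  have hsum : (∑ j ∈ Finset.range k,
      ((∑ x : I j, μ j x * (q j k f x) ^ 2) - (∑ x : I j, μ j x * q j k f x) ^ 2))
      ≤ ∑ j ∈ Finset.range k, Real.sqrt (d j k) := by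
    apply Finset.sum_le_sum
    intro j hj
    have hjk : j < k := Finset.mem_range.mp hj
    have h := (main j k hjk hkn f).2
    have hs0 := Real.sqrt_nonneg (d j k)
    nlinarith
  linarith
end

section
/- In the tree model, the asymptotic variance of the constant test function f ≡ 1 satisfies, for every 0 ≤ k ≤ n: Σ_{j=0}^k Var_{μ_j}(q_{j,k}(1)) = Σ_{j=0}^k Σ_{x∈I_j} μ_k^{→j}(x)·( μ_k^{→j}(x)/μ_j(x) − 1 ), where μ_k^{→k} := μ_k. -/
/- Sequential MCMC on trees: explicit expression for the asymptotic variance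
   of the test function f ≡ 1 (Proposition 3.4 of the paper).
   The j = k term of each sum (with μ_k^{→k} := μ_k and q_{k,k}(1) = 1) is
   written out separately. -/
theorem stmt_2
    (n : ℕ) (I : ℕ → Type)
    [∀ k, Fintype (I k)] [∀ k, Nonempty (I k)] [∀ k, DecidableEq (I k)]
    (μ : ∀ k, I k → ℝ)
    (hμpos : ∀ k, k ≤ n → ∀ x, 0 < μ k x)
    (hμsum : ∀ k, k ≤ n → ∑ x, μ k x = 1)
    (p : ∀ j k : ℕ, I k → I j)
    (htrans : ∀ j k l : ℕ, j < k → k < l → l ≤ n → ∀ x : I l, p j l x = p j k (p k l x))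
    (hsucc : ∀ k l : ℕ, k < l → l ≤ n → ∀ x : I k, ∃ y : I l, p k l y = x)
    (proj : ∀ j k : ℕ, I j → ℝ)
    (hproj : ∀ (j k : ℕ) (x : I j), proj j k x = ∑ y : I k, if p j k y = x then μ k y else 0)
    (q : ∀ j k : ℕ, (I k → ℝ) → I j → ℝ)
    (hq : ∀ (j k : ℕ), j < k → ∀ (f : I k → ℝ) (x : I j),
      q j k f x = (∑ y : I k, if p j k y = x then f y * μ k y else 0) / μ j x)
    (hqdiag : ∀ (k : ℕ) (f : I k → ℝ), q k k f = f) :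
    ∀ k : ℕ, k ≤ n →
      (∑ j ∈ Finset.range k,
          ((∑ x : I j, μ j x * (q j k (fun _ => (1:ℝ)) x)^2)
            - (∑ x : I j, μ j x * q j k (fun _ => (1:ℝ)) x)^2))
        + ((∑ x : I k, μ k x * ((1:ℝ))^2) - (∑ x : I k, μ k x * (1:ℝ))^2)
      = (∑ j ∈ Finset.range k, ∑ x : I j, proj j k x * (proj j k x / μ j x - 1))
        + (∑ x : I k, μ k x * (μ k x / μ k x - 1)) := by
  intro k hk
  -- q j k 1 x = proj j k x / μ j x for j < k
  have hq1 : ∀ j, j < k → ∀ x : I j, q j k (fun _ => (1:ℝ)) x = proj j k x / μ j x := by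
    intro j hj x
    rw [hq j k hj, hproj]
    simp
  -- ∑ x, proj j k x = 1
  have hprojsum : ∀ j, j < k → ∑ x : I j, proj j k x = 1 := by
    intro j hj
    have : ∑ x : I j, proj j k x = ∑ y : I k, μ k y := by
      simp only [hproj]
      rw [Finset.sum_comm]
      exact Finset.sum_congr rfl fun y _ => by simp
    rw [this, hμsum k hk]
  congr 1
  · apply Finset.sum_congr rfl
    intro j hj
    have hjk : j < k := Finset.mem_range.mp hj
    have hμj : ∀ x : I j, μ j x ≠ 0 := fun x => (hμpos j (le_of_lt (lt_of_lt_of_le hjk hk)) x).ne'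
    have h1 : (∑ x : I j, μ j x * q j k (fun _ => (1:ℝ)) x) = 1 := by
      have e : ∀ x : I j, μ j x * q j k (fun _ => (1:ℝ)) x = proj j k x := fun x => by
        rw [hq1 j hjk x, mul_div_cancel₀ _ (hμj x)]
      rw [Finset.sum_congr rfl fun x _ => e x, hprojsum j hjk]
    rw [h1]
    have h2 : ∀ x : I j, μ j x * (q j k (fun _ => (1:ℝ)) x)^2
        = proj j k x * (proj j k x / μ j x - 1) + proj j k x := by
      intro x
      rw [hq1 j hjk x]
      field_simp [hμj x]
      ring
    calc (∑ x : I j, μ j x * (q j k (fun _ => (1:ℝ)) x)^2) - 1^2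
        = (∑ x : I j, (proj j k x * (proj j k x / μ j x - 1) + proj j k x)) - 1 := by
          rw [Finset.sum_congr rfl fun x _ => h2 x]; norm_num
      _ = ∑ x : I j, proj j k x * (proj j k x / μ j x - 1) := by
          rw [Finset.sum_add_distrib, hprojsum j hjk]; ring
  · have hμk : ∀ x : I k, μ k x ≠ 0 := fun x => (hμpos k hk x).ne'
    have : ∀ x : I k, μ k x * (μ k x / μ k x - 1) = 0 := by
      intro x; rw [div_self (hμk x)]; ring
    rw [Finset.sum_congr rfl fun x _ => this x]
    simp [hμsum k hk]
end

section
/- In the tree model, for all 0 ≤ j < k ≤ n and every f : I_k → ℝ one has the variance bound Var_{μ_j}(q_{j,k}(f)) ≤ d̃_{j,k}·‖f‖_k², where d̃_{j,k} = Σ_{x∈I_j} μ_k^{→j}(x)²/μ_j(x). -/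
/- Sequential MCMC on trees: sharpened variance bound with the constant
   d̃_{j,k} = Σ_x μ_k^{→j}(x)²/μ_j(x) (end of Section 3.2 of the paper). -/
theorem stmt_3
    (n : ℕ) (I : ℕ → Type)
    [∀ k, Fintype (I k)] [∀ k, Nonempty (I k)] [∀ k, DecidableEq (I k)]
    (μ : ∀ k, I k → ℝ)
    (hμpos : ∀ k, k ≤ n → ∀ x, 0 < μ k x)
    (hμsum : ∀ k, k ≤ n → ∑ x, μ k x = 1)
    (p : ∀ j k : ℕ, I k → I j)
    (htrans : ∀ j k l : ℕ, j < k → k < l → l ≤ n → ∀ x : I l, p j l x = p j k (p k l x))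
    (hsucc : ∀ k l : ℕ, k < l → l ≤ n → ∀ x : I k, ∃ y : I l, p k l y = x)
    (proj : ∀ j k : ℕ, I j → ℝ)
    (hproj : ∀ (j k : ℕ) (x : I j), proj j k x = ∑ y : I k, if p j k y = x then μ k y else 0)
    (q : ∀ j k : ℕ, (I k → ℝ) → I j → ℝ)
    (hq : ∀ (j k : ℕ), j < k → ∀ (f : I k → ℝ) (x : I j),
      q j k f x = (∑ y : I k, if p j k y = x then f y * μ k y else 0) / μ j x) :
    ∀ j k : ℕ, j < k → k ≤ n → ∀ f : I k → ℝ,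
      (∑ x : I j, μ j x * (q j k f x)^2) - (∑ x : I j, μ j x * q j k f x)^2
        ≤ (∑ x : I j, (proj j k x)^2 / μ j x)
          * (Finset.univ.sup' Finset.univ_nonempty fun y : I k => |f y|)^2 := by

  intro j k hjk hkn f
  set M := Finset.univ.sup' Finset.univ_nonempty fun y : I k => |f y| with hM
  have hjn : j ≤ n := le_trans (le_of_lt hjk) hkn
  have key : ∀ x : I j, μ j x * (q j k f x)^2 ≤ (proj j k x)^2 / μ j x * M^2 := by
    intro x
    have hμx := hμpos j hjn x
    set S := ∑ y : I k, if p j k y = x then f y * μ k y else 0 with hS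
    have hqx : q j k f x = S / μ j x := hq j k hjk f x
    have hSle : |S| ≤ M * proj j k x := by
      rw [hproj]
      calc |S| ≤ ∑ y : I k, |if p j k y = x then f y * μ k y else 0| :=
            Finset.abs_sum_le_sum_abs _ _
        _ ≤ ∑ y : I k, M * (if p j k y = x then μ k y else 0) := by
            apply Finset.sum_le_sum
            intro y _
            by_cases h : p j k y = x
            · simp only [h, if_true]
              rw [abs_mul, abs_of_pos (hμpos k hkn y)]
              exact mul_le_mul_of_nonneg_right
                (Finset.le_sup' (fun y => |f y|) (Finset.mem_univ y))
                (le_of_lt (hμpos k hkn y))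
            · simp [h]
        _ = M * ∑ y : I k, (if p j k y = x then μ k y else 0) := by
            rw [Finset.mul_sum]
    have hS2 : S^2 ≤ M^2 * (proj j k x)^2 := by
      nlinarith [sq_abs S, abs_nonneg S]
    have heq : μ j x * (S / μ j x)^2 = S^2 / μ j x := by
      field_simp
    rw [hqx, heq, div_mul_eq_mul_div]
    apply div_le_div_of_nonneg_right ?_ hμx.le
    nlinarith [hS2]
  calc (∑ x : I j, μ j x * (q j k f x)^2) - (∑ x : I j, μ j x * q j k f x)^2
      ≤ ∑ x : I j, μ j x * (q j k f x)^2 := sub_le_self _ (sq_nonneg _)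
    _ ≤ ∑ x : I j, (proj j k x)^2 / μ j x * M^2 :=
        Finset.sum_le_sum (fun x _ => key x)
    _ = (∑ x : I j, (proj j k x)^2 / μ j x) * M^2 := by rw [Finset.sum_mul]
end

section
/- In the branching example with parameter θ > 0, for all 0 ≤ k < l ≤ n and j ∈ I_k one has q_{k,l}(1)(j) = Z_k/Z_l if j < k and q_{k,l}(1)(k) = Z_k·Z_{l−k}/Z_l. Furthermore, if θ ≥ 1 then max_{j∈I_k} q_{k,l}(1)(j) = Z_k·Z_{l−k}/Z_l. -/
/-- Normalizing constant of the branching example: Z_k = θ^k + Σ_{j=0}^{k-1} θ^{j+1}. -/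
noncomputable def Zb (θ : ℝ) (k : ℕ) : ℝ := θ^k + ∑ j ∈ Finset.range k, θ^(j+1)

/-- The measures of the branching example. -/
noncomputable def muB (θ : ℝ) (k : ℕ) (j : Fin (k+1)) : ℝ :=
  if (j:ℕ) < k then θ^((j:ℕ)+1) / Zb θ k else θ^k / Zb θ k

/-- The Feynman-Kac propagator of the branching example applied to the
constant function 1:  q_{k,l}(1)(j) = μ_l(s_l(j))/μ_k(j), where
s_l(j) = {j} for j < k and s_l(k) = {k,…,l}. -/
noncomputable def qB (θ : ℝ) (k l : ℕ) (j : Fin (k+1)) : ℝ :=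
  (∑ i : Fin (l+1), if (if (j:ℕ) < k then (i:ℕ) = (j:ℕ) else k ≤ (i:ℕ))
      then muB θ l i else 0) / muB θ k j

lemma Zb_pos {θ : ℝ} (hθ : 0 < θ) (m : ℕ) : 0 < Zb θ m := by
  have h1 : 0 < θ ^ m := pow_pos hθ m
  have h2 : 0 ≤ ∑ j ∈ Finset.range m, θ^(j+1) :=
    Finset.sum_nonneg fun j _ => le_of_lt (pow_pos hθ _)
  unfold Zb; linarith

lemma Zb_one_le {θ : ℝ} (hθ : 1 ≤ θ) (m : ℕ) : 1 ≤ Zb θ m := by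
  have h1 : 1 ≤ θ ^ m := one_le_pow₀ hθ
  have h2 : 0 ≤ ∑ j ∈ Finset.range m, θ^(j+1) :=
    Finset.sum_nonneg fun j _ => le_of_lt (pow_pos (lt_of_lt_of_le one_pos hθ) _)
  unfold Zb; linarith

lemma sum_tail (θ : ℝ) {k l : ℕ} (hkl : k < l) :
    ∑ i ∈ Finset.range (l+1), (if k ≤ i then (if i < l then θ^(i+1) else θ^l) else 0)
      = θ^k * Zb θ (l-k) := by
  have hsub : Finset.Ico k (l+1) ⊆ Finset.range (l+1) := by
    intro i hi
    simp only [Finset.mem_Ico] at hi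
    exact Finset.mem_range.mpr hi.2
  rw [← Finset.sum_subset hsub (by
    intro x hx hnx
    have : ¬ k ≤ x := by
      simp only [Finset.mem_Ico, Finset.mem_range] at hx hnx
      omega
    rw [if_neg this])]
  rw [Finset.sum_Ico_succ_top (by omega : k ≤ l)]
  have hterm : (if k ≤ l then (if l < l then θ^(l+1) else θ^l) else 0) = θ^l := by
    rw [if_pos (le_of_lt hkl), if_neg (lt_irrefl l)]
  rw [hterm]
  have hcongr : ∀ i ∈ Finset.Ico k l,
      (if k ≤ i then (if i < l then θ^(i+1) else θ^l) else 0) = θ^(i+1) := by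
    intro i hi
    simp only [Finset.mem_Ico] at hi
    rw [if_pos hi.1, if_pos hi.2]
  rw [Finset.sum_congr rfl hcongr, Finset.sum_Ico_eq_sum_range]
  unfold Zb
  rw [mul_add, Finset.mul_sum, ← pow_add]
  have : k + (l - k) = l := by omega
  rw [this, add_comm]
  congr 1
  apply Finset.sum_congr rfl
  intro i _
  rw [show k + i + 1 = k + (i+1) by omega, pow_add]

theorem stmt_6 (θ : ℝ) (hθ : 0 < θ) (n k l : ℕ) (hkl : k < l) (hln : l ≤ n) :
    (∀ j : Fin (k+1),
      ((j:ℕ) < k → qB θ k l j = Zb θ k / Zb θ l)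
      ∧ ((j:ℕ) = k → qB θ k l j = Zb θ k * Zb θ (l - k) / Zb θ l))
    ∧ (1 ≤ θ →
        Finset.univ.sup' Finset.univ_nonempty (qB θ k l)
          = Zb θ k * Zb θ (l - k) / Zb θ l) := by
  have hZk := Zb_pos hθ k
  have hZl := Zb_pos hθ l
  have hZlk := Zb_pos hθ (l - k)
  have hmain : ∀ j : Fin (k+1),
      ((j:ℕ) < k → qB θ k l j = Zb θ k / Zb θ l)
      ∧ ((j:ℕ) = k → qB θ k l j = Zb θ k * Zb θ (l - k) / Zb θ l) := by
    intro j
    constructor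
    · intro hj
      have hjl : (j:ℕ) < l := lt_trans hj hkl
      have hsum : (∑ i : Fin (l+1), if (if (j:ℕ) < k then (i:ℕ) = (j:ℕ) else k ≤ (i:ℕ))
          then muB θ l i else 0) = θ^((j:ℕ)+1) / Zb θ l := by
        simp only [if_pos hj, muB]
        rw [Fin.sum_univ_eq_sum_range
          (fun i => if i = (j:ℕ) then (if i < l then θ^(i+1)/Zb θ l else θ^l/Zb θ l) else 0)]
        rw [Finset.sum_ite_eq' (Finset.range (l+1)) (j:ℕ)]
        rw [if_pos (Finset.mem_range.mpr (by omega)), if_pos hjl]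
      rw [qB, hsum, muB, if_pos hj]
      have hp : θ^((j:ℕ)+1) ≠ 0 := ne_of_gt (pow_pos hθ _)
      field_simp
    · intro hj
      have hnlt : ¬ (j:ℕ) < k := by omega
      have hsum : (∑ i : Fin (l+1), if (if (j:ℕ) < k then (i:ℕ) = (j:ℕ) else k ≤ (i:ℕ))
          then muB θ l i else 0) = θ^k * Zb θ (l-k) / Zb θ l := by
        simp only [if_neg hnlt, muB]
        rw [Fin.sum_univ_eq_sum_range
          (fun i => if k ≤ i then (if i < l then θ^(i+1)/Zb θ l else θ^l/Zb θ l) else 0)]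
        have : ∀ i ∈ Finset.range (l+1),
            (if k ≤ i then (if i < l then θ^(i+1)/Zb θ l else θ^l/Zb θ l) else 0)
            = (if k ≤ i then (if i < l then θ^(i+1) else θ^l) else 0) / Zb θ l := by
          intro i _
          split_ifs <;> simp
        rw [Finset.sum_congr rfl this, ← Finset.sum_div, sum_tail θ hkl]
      rw [qB, hsum, muB, if_neg hnlt]
      have hp : θ^k ≠ 0 := ne_of_gt (pow_pos hθ _)
      field_simp
  refine ⟨hmain, ?_⟩
  intro hθ1
  apply le_antisymm
  · apply Finset.sup'_le
    intro j _
    rcases lt_or_eq_of_le (Nat.lt_succ_iff.mp j.isLt) with hj | hj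
    · rw [(hmain j).1 hj]
      gcongr
      exact le_mul_of_one_le_right hZk.le (Zb_one_le hθ1 _)
    · rw [(hmain j).2 hj]
  · have hlast : qB θ k l (Fin.last k) = Zb θ k * Zb θ (l - k) / Zb θ l :=
      (hmain (Fin.last k)).2 (by simp [Fin.last])
    rw [← hlast]
    exact Finset.le_sup' (qB θ k l) (Finset.mem_univ (Fin.last k))
end

section
/- In the branching example with θ = 1 (so that μ_j is the uniform distribution on I_j = {0,…,j}), the asymptotic variance of the constant test function satisfies Σ_{j=0}^n Var_{μ_j}(q_{j,n}(1)) = n²(n−1)/(12(n+1)). Equivalently, Σ_{j=0}^n [ −1 + ((j+1)/(n+1)²)·( j + (n−j+1)² ) ] = n²(n−1)/(12(n+1)). -/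
/-- The propagator q_{j,n}(1)(x) = μ_n^{→j}(x)/μ_j(x) of the branching example
at θ = 1: μ_j is uniform on {0,…,j}, and the projection of μ_n to I_j is
μ_n^{→j}(x) = (n-j+1)/(n+1) if x = j and 1/(n+1) if x < j. -/
noncomputable def qTheta1 (n j : ℕ) (x : Fin (j+1)) : ℝ :=
  (if (x:ℕ) = j then ((n:ℝ)-(j:ℝ)+1)/((n:ℝ)+1) else 1/((n:ℝ)+1)) / (1/((j:ℝ)+1))

lemma sum_cast_range (m : ℕ) : ∑ j ∈ Finset.range m, (j:ℝ) = m*(m-1)/2 := by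
  induction m with
  | zero => simp
  | succ k ih => rw [Finset.sum_range_succ, ih]; push_cast; ring

lemma sum_sq_range (m : ℕ) : ∑ j ∈ Finset.range m, (j:ℝ)^2 = m*(m-1)*(2*m-1)/6 := by
  induction m with
  | zero => simp
  | succ k ih => rw [Finset.sum_range_succ, ih]; push_cast; ring

lemma sum_cube_range (m : ℕ) : ∑ j ∈ Finset.range m, (j:ℝ)^3 = (m*(m-1)/2)^2 := by
  induction m with
  | zero => simp
  | succ k ih => rw [Finset.sum_range_succ, ih]; push_cast; ring

lemma inner_sq (n j : ℕ) :
    ∑ x : Fin (j+1), (1/((j:ℝ)+1)) * (qTheta1 n j x)^2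
      = ((j:ℝ)+1)/((n:ℝ)+1)^2 * ((j:ℝ) + ((n:ℝ)-(j:ℝ)+1)^2) := by
  have hne : ∀ x : Fin j, ((x:ℕ) = j) = False :=
    fun x => eq_false (Nat.ne_of_lt x.isLt)
  rw [Fin.sum_univ_castSucc]
  simp only [qTheta1, Fin.coe_castSucc, Fin.val_last, hne, if_false, if_true, if_pos rfl,
    Finset.sum_const, Finset.card_univ, Fintype.card_fin, nsmul_eq_mul]
  have hj : ((j:ℝ)+1) ≠ 0 := by positivity
  have hn : ((n:ℝ)+1) ≠ 0 := by positivity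
  field_simp

lemma inner_mean (n j : ℕ) :
    ∑ x : Fin (j+1), (1/((j:ℝ)+1)) * qTheta1 n j x = 1 := by
  have hne : ∀ x : Fin j, ((x:ℕ) = j) = False :=
    fun x => eq_false (Nat.ne_of_lt x.isLt)
  rw [Fin.sum_univ_castSucc]
  simp only [qTheta1, Fin.coe_castSucc, Fin.val_last, hne, if_false, if_true, if_pos rfl,
    Finset.sum_const, Finset.card_univ, Fintype.card_fin, nsmul_eq_mul]
  have hj : ((j:ℝ)+1) ≠ 0 := by positivity
  have hn : ((n:ℝ)+1) ≠ 0 := by positivity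
  field_simp
  ring

lemma main_sum (n : ℕ) :
    (∑ j ∈ Finset.range (n+1),
        (-1 + ((j:ℝ)+1)/((n:ℝ)+1)^2 * ((j:ℝ) + ((n:ℝ)-(j:ℝ)+1)^2)))
      = (n:ℝ)^2 * ((n:ℝ)-1) / (12*((n:ℝ)+1)) := by
  have hn : ((n:ℝ)+1) ≠ 0 := by positivity
  have expand : ∀ j ∈ Finset.range (n+1),
      (-1 + ((j:ℝ)+1)/((n:ℝ)+1)^2 * ((j:ℝ) + ((n:ℝ)-(j:ℝ)+1)^2))
        = (1/((n:ℝ)+1)^2) * (j:ℝ)^3 - (2*(n:ℝ)/((n:ℝ)+1)^2) * (j:ℝ)^2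
            + ((n:ℝ)^2/((n:ℝ)+1)^2) * (j:ℝ) + 0 := by
    intro j _
    field_simp
    ring
  rw [Finset.sum_congr rfl expand]
  rw [Finset.sum_add_distrib, Finset.sum_add_distrib, Finset.sum_sub_distrib,
    ← Finset.mul_sum, ← Finset.mul_sum, ← Finset.mul_sum,
    sum_cube_range, sum_sq_range, sum_cast_range, Finset.sum_const, Finset.card_range,
    smul_zero]
  push_cast
  field_simp
  ring

theorem stmt_9 (n : ℕ) :
    (∑ j ∈ Finset.range (n+1),
        ((∑ x : Fin (j+1), (1/((j:ℝ)+1)) * (qTheta1 n j x)^2)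
          - (∑ x : Fin (j+1), (1/((j:ℝ)+1)) * qTheta1 n j x)^2))
      = (n:ℝ)^2 * ((n:ℝ)-1) / (12*((n:ℝ)+1))
    ∧ (∑ j ∈ Finset.range (n+1),
        (-1 + ((j:ℝ)+1)/((n:ℝ)+1)^2 * ((j:ℝ) + ((n:ℝ)-(j:ℝ)+1)^2)))
      = (n:ℝ)^2 * ((n:ℝ)-1) / (12*((n:ℝ)+1)) := by
  refine ⟨(Finset.sum_congr rfl fun j _ => ?_).trans (main_sum n), main_sum n⟩
  rw [inner_sq, inner_mean]
  ring
end

section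
/- In the branching example with parameter θ > 0, let π_n be the probability measure on I_n = {0,…,n} given by π_n(j) = 2^{−(j+1)} for j < n and π_n(n) = 2^{−n}, let ξ¹,…,ξ^N be i.i.d. with law π_n, and let η̃_n(f) = (1/N) Σ_{i=1}^N f(ξ^i)·μ_n(ξ^i)/π_n(ξ^i) be the Sequential Importance Sampling estimator. Then for f = 1_{{n}}: E[|η̃_n(f) − μ_n(f)|²] = (2^n − 1) / ( N·( 1 + (θ/(θ−1))·(1 − θ^{−n}) )² ) if θ ≠ 1, and = (2^n − 1)/(N·(n+1)²) if θ = 1. Moreover, if θ > 2^{−1/2} then there exist constants C > 0 and ρ > 1 such that N·E[|η̃_n(f) − μ_n(f)|²] ≥ C·ρ^n for all sufficiently large n. -/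
open Finset

/-- The Sequential Importance Sampling proposal distribution of the branching
example: π_n(j) = 2^{-(j+1)} for j < n and π_n(n) = 2^{-n}. -/
noncomputable def piB (n : ℕ) (j : Fin (n+1)) : ℝ :=
  if (j:ℕ) < n then (1/2:ℝ)^((j:ℕ)+1) else (1/2:ℝ)^n

/-- Mean squared error E[|η̃_n(f) - μ_n(f)|²] of the Sequential Importance
Sampling estimator for the test function f = 1_{{n}}, written as the sum over
the product space of the N i.i.d. samples with law π_n. -/
noncomputable def errSIS (θ : ℝ) (N n : ℕ) : ℝ :=
  ∑ ω : Fin N → Fin (n+1), (∏ i, piB n (ω i)) *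
    (((N:ℝ))⁻¹ * (∑ i, (if ((ω i : ℕ) = n) then (1:ℝ) else 0)
        * (muB θ n (ω i) / piB n (ω i)))
      - muB θ n (Fin.last n))^2

lemma var_identity {α : Type*} [Fintype α] (p h : α → ℝ) (N : ℕ)
    (hp : ∑ j, p j = 1) (hh : ∑ j, p j * h j = 0) :
    ∑ ω : Fin N → α, (∏ i, p (ω i)) * (∑ i, h (ω i))^2
      = N * ∑ j, p j * (h j)^2 := by
  have key : ∀ (i i' : Fin N),
      (∑ ω : Fin N → α, ∏ k, (p (ω k) * (if k = i then h (ω k) else 1)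
          * (if k = i' then h (ω k) else 1)))
      = if i = i' then ∑ j, p j * (h j)^2 else 0 := by
    intro i i'
    have hrw := Finset.prod_univ_sum (fun _ : Fin N => (univ : Finset α))
      (fun k x => (p x * if k = i then h x else 1) * if k = i' then h x else 1)
    rw [← Fintype.piFinset_univ, ← hrw]
    by_cases hii : i = i'
    · subst hii
      simp only [if_pos rfl]
      rw [Finset.prod_eq_single_of_mem i (mem_univ i)]
      · apply Finset.sum_congr rfl
        intro x _
        simp [sq]; ring
      · intro k _ hk
        simp [hk, hp]
    · rw [if_neg hii]
      apply Finset.prod_eq_zero (mem_univ i)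
      have : ∀ x : α, (p x * if i = i then h x else 1) * (if i = i' then h x else 1)
          = p x * h x := by
        intro x; simp [hii]
      rw [Finset.sum_congr rfl (fun x _ => this x), hh]
  have step1 : ∀ ω : Fin N → α, (∏ i, p (ω i)) * (∑ i, h (ω i))^2
      = ∑ i, ∑ i', ∏ k, (p (ω k) * if k = i then h (ω k) else 1)
          * (if k = i' then h (ω k) else 1) := by
    intro ω
    have hf : ∀ i i' : Fin N,
        (∏ k, (p (ω k) * if k = i then h (ω k) else 1) * (if k = i' then h (ω k) else 1))
        = (∏ k, p (ω k)) * (h (ω i) * h (ω i')) := by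
      intro i i'
      rw [Finset.prod_mul_distrib, Finset.prod_mul_distrib,
        Finset.prod_ite_eq' univ i (fun k => h (ω k)),
        Finset.prod_ite_eq' univ i' (fun k => h (ω k))]
      simp [mul_assoc]
    simp_rw [hf, ← Finset.mul_sum, ← Finset.sum_mul]
    rw [sq]
  calc ∑ ω : Fin N → α, (∏ i, p (ω i)) * (∑ i, h (ω i))^2
      = ∑ ω : Fin N → α, ∑ i, ∑ i', ∏ k, (p (ω k) * if k = i then h (ω k) else 1)
          * (if k = i' then h (ω k) else 1) := Finset.sum_congr rfl (fun ω _ => step1 ω)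
    _ = ∑ i, ∑ i', ∑ ω : Fin N → α, ∏ k, (p (ω k) * if k = i then h (ω k) else 1)
          * (if k = i' then h (ω k) else 1) := by
        rw [Finset.sum_comm]
        exact Finset.sum_congr rfl (fun i _ => Finset.sum_comm)
    _ = ∑ i : Fin N, ∑ i' : Fin N, if i = i' then ∑ j, p j * (h j)^2 else 0 :=
        Finset.sum_congr rfl (fun i _ => Finset.sum_congr rfl (fun i' _ => key i i'))
    _ = N * ∑ j, p j * (h j)^2 := by
        simp [Finset.sum_ite_eq, Finset.sum_const, card_univ, mul_comm]

lemma geo_half (n : ℕ) : ∑ k ∈ Finset.range n, ((1/2:ℝ))^(k+1) = 1 - (1/2)^n := by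
  induction n with
  | zero => simp
  | succ k ih => rw [Finset.sum_range_succ, ih]; ring

/-- Centered weight function of the branching example. -/
noncomputable def hc (θ : ℝ) (n : ℕ) (j : Fin (n+1)) : ℝ :=
  (if ((j:ℕ) = n) then (1:ℝ) else 0) * (muB θ n j / piB n j) - muB θ n (Fin.last n)

lemma branching_sums (θ : ℝ) (n : ℕ) :
    (∑ j, piB n j = 1)
    ∧ (∑ j, piB n j * hc θ n j = 0)
    ∧ (∑ j, piB n j * (hc θ n j)^2 = ((2:ℝ)^n - 1) * (muB θ n (Fin.last n))^2) := by
  set m := muB θ n (Fin.last n) with hm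
  have key : ((1/2:ℝ))^n * 2^n = 1 := by rw [← mul_pow]; norm_num
  have hgeo : ∑ i : Fin n, ((1/2:ℝ))^((i:ℕ)+1) = 1 - (1/2)^n := by
    rw [Fin.sum_univ_eq_sum_range (fun k => ((1/2:ℝ))^(k+1))]
    exact geo_half n
  have hp_lt : ∀ i : Fin n, piB n i.castSucc = (1/2:ℝ)^((i:ℕ)+1) := by
    intro i; simp [piB, i.isLt]
  have hh_lt : ∀ i : Fin n, hc θ n i.castSucc = -m := by
    intro i
    simp only [hc, Fin.coe_castSucc, ← hm]
    rw [if_neg (Nat.ne_of_lt i.isLt)]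
    ring
  have hp_last : piB n (Fin.last n) = (1/2:ℝ)^n := by simp [piB]
  have hh_last : hc θ n (Fin.last n) = m * 2^n - m := by
    simp only [hc, Fin.val_last, if_pos rfl, hp_last, one_mul, ← hm]
    have : m / (1/2:ℝ)^n = m * 2^n := by
      rw [div_eq_iff (by positivity), mul_assoc, mul_comm ((2:ℝ)^n), key, mul_one]
    norm_num [this]
  refine ⟨?_, ?_, ?_⟩
  · rw [Fin.sum_univ_castSucc]
    simp_rw [hp_lt, hp_last, hgeo]; ring
  · rw [Fin.sum_univ_castSucc]
    simp_rw [hp_lt, hh_lt, hh_last, hp_last, ← Finset.sum_mul, hgeo]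
    linear_combination m * key
  · rw [Fin.sum_univ_castSucc]
    simp_rw [hp_lt, hh_lt, hh_last, hp_last, ← Finset.sum_mul, hgeo]
    linear_combination m^2 * ((2:ℝ)^n - 2) * key

lemma errSIS_eq (θ : ℝ) (N n : ℕ) (hN : 0 < N) :
    errSIS θ N n = ((2:ℝ)^n - 1) * (muB θ n (Fin.last n))^2 / N := by
  obtain ⟨hA, hB, hC⟩ := branching_sums θ n
  have hNR : (N:ℝ) ≠ 0 := Nat.cast_ne_zero.mpr hN.ne'
  have step : ∀ ω : Fin N → Fin (n+1),
      ((N:ℝ))⁻¹ * (∑ i, (if ((ω i : ℕ) = n) then (1:ℝ) else 0)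
          * (muB θ n (ω i) / piB n (ω i))) - muB θ n (Fin.last n)
      = (N:ℝ)⁻¹ * ∑ i, hc θ n (ω i) := by
    intro ω
    have : ∑ i, hc θ n (ω i) = (∑ i, (if ((ω i : ℕ) = n) then (1:ℝ) else 0)
        * (muB θ n (ω i) / piB n (ω i))) - N * muB θ n (Fin.last n) := by
      simp only [hc, Finset.sum_sub_distrib, Finset.sum_const, Finset.card_univ,
        Fintype.card_fin, nsmul_eq_mul]
    rw [this, mul_sub]
    field_simp
  unfold errSIS
  simp_rw [step, mul_pow, mul_left_comm]
  rw [← Finset.mul_sum, var_identity (piB n) (hc θ n) N hA hB, hC]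
  rw [inv_pow]
  field_simp

lemma muB_last (θ : ℝ) (n : ℕ) : muB θ n (Fin.last n) = θ^n / Zb θ n := by
  simp [muB]

/- Weight degeneracy of Sequential Importance Sampling in the branching
   example (Corollary 3.17 of the paper). -/
theorem stmt_10 (θ : ℝ) (hθ : 0 < θ) (N : ℕ) (hN : 0 < N) :
    (θ ≠ 1 → ∀ n : ℕ, errSIS θ N n
        = ((2:ℝ)^n - 1) / ((N:ℝ) * (1 + θ/(θ-1) * (1 - θ^(-(n:ℤ))))^2))
    ∧ (θ = 1 → ∀ n : ℕ, errSIS θ N n = ((2:ℝ)^n - 1) / ((N:ℝ) * ((n:ℝ)+1)^2))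
    ∧ (1 / Real.sqrt 2 < θ → ∃ C > (0:ℝ), ∃ ρ > (1:ℝ), ∃ n₀ : ℕ, ∀ n ≥ n₀,
        C * ρ^n ≤ (N:ℝ) * errSIS θ N n) := by
  have hNR : (N:ℝ) ≠ 0 := Nat.cast_ne_zero.mpr hN.ne'
  have h0 : θ ≠ 0 := hθ.ne'
  have hZpos : ∀ n : ℕ, 0 < Zb θ n := by
    intro n
    unfold Zb
    have h1 : (0:ℝ) < θ^n := pow_pos hθ n
    have h2 : (0:ℝ) ≤ ∑ j ∈ Finset.range n, θ^(j+1) :=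
      Finset.sum_nonneg (fun j _ => le_of_lt (pow_pos hθ (j+1)))
    linarith
  refine ⟨?_, ?_, ?_⟩
  · -- θ ≠ 1 case
    intro hθ1 n
    have h1 : θ - 1 ≠ 0 := sub_ne_zero.mpr hθ1
    have hpn : θ^n ≠ 0 := pow_ne_zero n h0
    set D := 1 + θ/(θ-1) * (1 - θ^(-(n:ℤ))) with hDdef
    have hZ : Zb θ n = θ^n * D := by
      rw [hDdef]
      have hz : θ^(-(n:ℤ)) = (θ^n)⁻¹ := by rw [zpow_neg, zpow_natCast]
      have hgeo : ∑ j ∈ Finset.range n, θ^(j+1) = (θ^n - 1)/(θ-1) * θ := by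
        simp_rw [pow_succ]
        rw [← Finset.sum_mul, geom_sum_eq hθ1]
      unfold Zb
      rw [hgeo, hz]
      field_simp
    have hD : D ≠ 0 := by
      intro hD0
      rw [hD0, mul_zero] at hZ
      exact (hZpos n).ne' hZ
    clear_value D
    rw [errSIS_eq θ N n hN, muB_last, hZ]
    rw [div_mul_cancel_left₀ hpn]
    ring
  · -- θ = 1 case
    intro hθ1 n
    subst hθ1
    have hZ1 : Zb 1 n = (n:ℝ) + 1 := by unfold Zb; simp; ring
    set M := (n:ℝ) + 1 with hMdef
    have hZ1' : Zb 1 n = M := hZ1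
    clear_value M
    rw [errSIS_eq 1 N n hN, muB_last, hZ1']
    rw [one_pow]
    ring
  · -- θ > 1/√2 case
    intro hθ2
    have hs2pos : (0:ℝ) < Real.sqrt 2 := Real.sqrt_pos.mpr (by norm_num)
    have hs2 : (1:ℝ) < Real.sqrt 2 := by
      rw [show (1:ℝ) = Real.sqrt 1 from (Real.sqrt_one).symm]
      exact Real.sqrt_lt_sqrt (by norm_num) (by norm_num)
    have hr2 : θ⁻¹ < Real.sqrt 2 := by
      rw [one_div] at hθ2
      calc θ⁻¹ < ((Real.sqrt 2)⁻¹)⁻¹ := by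
            apply inv_strictAnti₀ (by positivity) hθ2
        _ = Real.sqrt 2 := inv_inv _
    set r := θ⁻¹ with hrdef
    set q := max 1 r with hqdef
    have hq1 : (1:ℝ) ≤ q := le_max_left _ _
    have hq0 : (0:ℝ) ≤ q := le_trans zero_le_one hq1
    have hqlt : q < Real.sqrt 2 := max_lt hs2 hr2
    set t := q^2 with htdef
    have ht1 : (1:ℝ) ≤ t := by nlinarith
    have ht2 : t < 2 := by
      have h2 : (Real.sqrt 2)^2 = 2 := Real.sq_sqrt (by norm_num)
      nlinarith
    set ρ := Real.sqrt (2/t) with hρdef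
    have htpos : (0:ℝ) < t := lt_of_lt_of_le one_pos ht1
    have h2t : (1:ℝ) < 2/t := by rw [lt_div_iff₀ htpos]; linarith
    have hρ1 : (1:ℝ) < ρ := by
      rw [hρdef, show (1:ℝ) = Real.sqrt 1 from (Real.sqrt_one).symm]
      exact Real.sqrt_lt_sqrt (by norm_num) h2t
    have hρsq : ρ^2 = 2/t := Real.sq_sqrt (by positivity)
    have hρpos : (0:ℝ) < ρ := lt_trans one_pos hρ1
    have hrq : r ≤ q := le_max_right _ _
    have hr0 : (0:ℝ) ≤ r := by positivity
    clear_value r q t ρ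
    -- find n₀ via tendsto
    have hinv : ‖ρ⁻¹‖ < 1 := by
      rw [Real.norm_eq_abs, abs_of_pos (by positivity)]
      rw [inv_lt_one_iff₀]; right; exact hρ1
    have hlim := (summable_pow_mul_geometric_of_norm_lt_one (R := ℝ) 2 hinv).tendsto_atTop_zero
    rw [Metric.tendsto_atTop] at hlim
    obtain ⟨a, ha⟩ := hlim (1/8) (by norm_num)
    refine ⟨1, one_pos, ρ, hρ1, max a 1, ?_⟩
    intro n hn
    have hn1 : 1 ≤ n := le_trans (le_max_right a 1) hn
    have hna : a ≤ n := le_trans (le_max_left a 1) hn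
    have hnR : (1:ℝ) ≤ (n:ℝ) := by exact_mod_cast hn1
    -- 2(n+1)^2 ≤ ρ^n
    have hρn : 2 * ((n:ℝ)+1)^2 ≤ ρ^n := by
      have hfn := ha n hna
      rw [Real.dist_eq, sub_zero] at hfn
      have hfn' : (n:ℝ)^2 * (ρ⁻¹)^n < 1/8 := lt_of_abs_lt hfn
      have hρnpos : (0:ℝ) < ρ^n := pow_pos hρpos n
      rw [inv_pow] at hfn'
      have h8 : 8 * (n:ℝ)^2 < ρ^n := by
        have := mul_lt_mul_of_pos_right hfn' hρnpos
        rw [mul_assoc, inv_mul_cancel₀ hρnpos.ne'] at this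
        linarith
      nlinarith
    -- Zb θ n = θ^n * S with S = 1 + geom sum in r
    have hZS : Zb θ n = θ^n * (1 + ∑ k ∈ Finset.range n, r^k) := by
      unfold Zb
      rw [mul_add, mul_one, Finset.mul_sum]
      congr 1
      have hterm : ∀ k ∈ Finset.range n, θ^n * r^k = θ^(n-k) := by
        intro k hk
        rw [hrdef, inv_pow, pow_sub₀ θ h0 (le_of_lt (Finset.mem_range.mp hk))]
      rw [Finset.sum_congr rfl hterm, ← Finset.sum_range_reflect (fun j => θ^(j+1)) n]
      apply Finset.sum_congr rfl
      intro j hj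
      have hjn := Finset.mem_range.mp hj
      congr 1
      omega
    set S := 1 + ∑ k ∈ Finset.range n, r^k with hSdef
    clear_value S
    have hSpos : (0:ℝ) < S := by
      rw [hSdef]
      have : (0:ℝ) ≤ ∑ k ∈ Finset.range n, r^k :=
        Finset.sum_nonneg (fun k _ => pow_nonneg hr0 k)
      linarith
    have hSle : S ≤ ((n:ℝ)+1) * q^n := by
      have h1 : (1:ℝ) ≤ q^n := one_le_pow₀ hq1
      have h2 : ∀ k ∈ Finset.range n, r^k ≤ q^n := by
        intro k hk
        calc r^k ≤ q^k := pow_le_pow_left₀ hr0 hrq k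
          _ ≤ q^n := pow_le_pow_right₀ hq1 (le_of_lt (Finset.mem_range.mp hk))
      calc S = 1 + ∑ k ∈ Finset.range n, r^k := hSdef
        _ ≤ q^n + ∑ k ∈ Finset.range n, q^n := add_le_add h1 (Finset.sum_le_sum h2)
        _ = ((n:ℝ)+1) * q^n := by
            rw [Finset.sum_const, Finset.card_range, nsmul_eq_mul]; ring
    -- final chain
    rw [one_mul, errSIS_eq θ N n hN, muB_last, hZS]
    have hpn : θ^n ≠ 0 := pow_ne_zero n h0
    rw [div_mul_cancel_left₀ hpn, mul_comm ((N:ℝ)), div_mul_cancel₀ _ hNR]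
    have hgoal : ρ^n * S^2 ≤ (2:ℝ)^n - 1 := by
      have hpow : ρ^n * ρ^n * t^n = 2^n := by
        have h3 : ρ^2 * t = 2 := by rw [hρsq, div_mul_cancel₀ _ htpos.ne']
        have h2 : ρ*ρ*t = 2 := by linear_combination h3
        rw [← mul_pow, ← mul_pow, h2]
      have hchain : ρ^n * S^2 ≤ ρ^n * (((n:ℝ)+1)^2 * t^n) := by
        apply mul_le_mul_of_nonneg_left _ (le_of_lt (pow_pos hρpos n))
        calc S^2 ≤ (((n:ℝ)+1) * q^n)^2 := by
              apply pow_le_pow_left₀ (le_of_lt hSpos) hSle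
          _ = ((n:ℝ)+1)^2 * t^n := by rw [htdef]; ring
      have h1t : (1:ℝ) ≤ t^n := one_le_pow₀ ht1
      have h1ρ : (1:ℝ) ≤ ρ^n := one_le_pow₀ (le_of_lt hρ1)
      have hn2 : (1:ℝ) ≤ ((n:ℝ)+1)^2 := by nlinarith
      have hkey : ρ^n * t^n * (2*((n:ℝ)+1)^2) ≤ ρ^n * t^n * ρ^n := by
        apply mul_le_mul_of_nonneg_left hρn
        positivity
      have e1 : 2 * (ρ^n * (((n:ℝ)+1)^2 * t^n)) ≤ 2^n := by
        calc 2 * (ρ^n * (((n:ℝ)+1)^2 * t^n)) = ρ^n * t^n * (2*((n:ℝ)+1)^2) := by ring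
          _ ≤ ρ^n * t^n * ρ^n := hkey
          _ = ρ^n * ρ^n * t^n := by ring
          _ = 2^n := hpow
      have e2 : (2:ℝ) ≤ 2^n := by
        calc (2:ℝ) = 2^1 := (pow_one 2).symm
          _ ≤ 2^n := pow_le_pow_right₀ (by norm_num) hn1
      linarith [hchain, e1, e2]
    calc ρ^n = ρ^n * S^2 / S^2 := by field_simp
      _ ≤ ((2:ℝ)^n - 1) / S^2 := by
          apply div_le_div_of_nonneg_right ?_ (by positivity)
          · exact hgoal
      _ = ((2:ℝ)^n - 1) * (S⁻¹)^2 := by rw [div_eq_mul_inv, inv_pow]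
end

section
/- In the partition setting under Assumption (D), for all 1 ≤ j < k ≤ n, every bounded measurable f and every i ∈ I_j one has ‖q̂_{j,k}(f)‖_{j,i,1} ≤ M_{j,k}(i)·max_{l∈s_k(i)} ‖f‖_{k,l,1}, and consequently ‖q̂_{j,k}(f)‖_{j,1} ≤ A_{j,k}·‖f‖_{k,1}. -/
open MeasureTheory

variable {E : Type} [MeasurableSpace E]
variable {I : ℕ → Type} [∀ k, Fintype (I k)] [∀ k, Nonempty (I k)] [∀ k, DecidableEq (I k)]

/-- The restricted (normalized) measure μ_{k,j}: the restriction of `μ` to the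
partition element `S`, normalized to a probability measure. -/
noncomputable def muLoc (μ : Measure E) (S : Set E) : Measure E := (μ S)⁻¹ • μ.restrict S

/-- The local L_p-norm ‖f‖_{k,j,p} = μ_{k,j}(|f|^p)^{1/p}. -/
noncomputable def locNorm (ν : Measure E) (p : ℝ) (f : E → ℝ) : ℝ :=
  (∫ x, |f x| ^ p ∂ν) ^ (1/p)

/-- The norm ‖f‖_{k,p} = max_{j ∈ I_k} ‖f‖_{k,j,p}. -/
noncomputable def maxNorm (μ : ℕ → Measure E) (F : ∀ k, I k → Set E) (k : ℕ) (p : ℝ)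
    (f : E → ℝ) : ℝ :=
  Finset.univ.sup' Finset.univ_nonempty fun j : I k => locNorm (muLoc (μ k) (F k j)) p f

/-- The relative mass change m_{k,k+1}(j) = μ_{k+1}(F_j)/μ_k(F_j). -/
noncomputable def mRatio (μ : ℕ → Measure E) (F : ∀ k, I k → Set E) (k : ℕ) (j : I k) : ℝ :=
  (μ (k+1) (F k j)).toReal / (μ k (F k j)).toReal

/-- The successor set s_k(i) = {l ∈ I_k | p_j(l) = i} of i ∈ I_j. -/
def succSet (p : ∀ j k : ℕ, I k → I j) (j k : ℕ) (i : I j) : Finset (I k) :=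
  Finset.univ.filter fun l => p j k l = i

/-- The product Π_{r=j}^{k-1} m_{r,r+1}(p_r(l)) of relative mass changes along
the branch leading to l ∈ I_k; its maximum over l ∈ s_k(i) is M_{j,k}(i). -/
noncomputable def Mprod (μ : ℕ → Measure E) (F : ∀ k, I k → Set E) (p : ∀ j k : ℕ, I k → I j)
    (j k : ℕ) (l : I k) : ℝ :=
  ∏ r ∈ Finset.Ico j k, mRatio μ F r (p r k l)

/-- The propagator q_{j,k}(f) = ḡ_{j,j+1}·q̂_{j+1,k}(K_k(f)). -/
noncomputable def qFull (μ : ℕ → Measure E) (g : ℕ → E → ℝ) (K : ℕ → E → Measure E)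
    (qhat : ℕ → ℕ → (E → ℝ) → E → ℝ) (j k : ℕ) (f : E → ℝ) : E → ℝ :=
  fun x => (g j x / (∫ z, g j z ∂(μ j))) * qhat (j+1) k (fun y => ∫ z, f z ∂(K k y)) x

/-- The constant δ(2^r) = Π_{t=1}^{r} γ^{1-2^{-(t-1)}}/(1-α·γ^{2^t-2})^{2^{-t}}. -/
noncomputable def deltaP (α γ : ℝ) (r : ℕ) : ℝ :=
  ∏ t ∈ Finset.Icc 1 r,
    γ ^ (1 - (2:ℝ) ^ (1 - (t:ℝ))) / (1 - α * γ ^ ((2:ℝ) ^ t - 2)) ^ ((2:ℝ) ^ (-(t:ℝ)))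

open ProbabilityTheory

lemma aux_integrable {ν : Measure E} [IsFiniteMeasure ν] {h : E → ℝ} (hm : Measurable h)
    {C : ℝ} (hb : ∀ x, |h x| ≤ C) : Integrable h ν :=
  Integrable.mono' (integrable_const C) hm.aestronglyMeasurable
    (Filter.Eventually.of_forall fun x => by simpa [Real.norm_eq_abs] using hb x)

lemma aux_meas_kint {K : E → Measure E} (hK : Measurable K) (hKp : ∀ x, IsProbabilityMeasure (K x))
    {h : E → ℝ} (hm : Measurable h) :
    Measurable fun x => ∫ y, h y ∂(K x) := by
  let κ : Kernel E E := ⟨K, hK⟩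
  have : IsMarkovKernel κ := ⟨fun x => hKp x⟩
  have := MeasureTheory.StronglyMeasurable.integral_kernel_prod_right
    (κ := κ) (f := fun _ y => h y) ((hm.comp measurable_snd).stronglyMeasurable)
  exact this.measurable

lemma aux_invariance {μm : Measure E} {K : E → Measure E}
    (hK : Measurable K) (hKp : ∀ x, IsProbabilityMeasure (K x))
    (hinv : μm.bind K = μm) {φ : E → ℝ} (hm : Measurable φ) (hnn : ∀ x, 0 ≤ φ x)
    {C : ℝ} (hb : ∀ x, |φ x| ≤ C) :
    ∫ x, (∫ y, φ y ∂(K x)) ∂μm = ∫ x, φ x ∂μm := by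
  have hint : ∀ x, Integrable φ (K x) := fun x => have := hKp x; aux_integrable hm hb
  have h1 : ∀ x, ENNReal.ofReal (∫ y, φ y ∂(K x)) = ∫⁻ y, ENNReal.ofReal (φ y) ∂(K x) :=
    fun x => ofReal_integral_eq_lintegral_ofReal (hint x) (Filter.Eventually.of_forall hnn)
  have hmeas := aux_meas_kint hK hKp hm
  have houter_nn : ∀ x, 0 ≤ ∫ y, φ y ∂(K x) := fun x => integral_nonneg hnn
  rw [integral_eq_lintegral_of_nonneg_ae (Filter.Eventually.of_forall houter_nn)
        hmeas.aestronglyMeasurable,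
      integral_eq_lintegral_of_nonneg_ae (Filter.Eventually.of_forall hnn)
        hm.aestronglyMeasurable]
  congr 1
  calc ∫⁻ x, ENNReal.ofReal (∫ y, φ y ∂(K x)) ∂μm
      = ∫⁻ x, ∫⁻ y, ENNReal.ofReal (φ y) ∂(K x) ∂μm := by simp_rw [h1]
    _ = ∫⁻ y, ENNReal.ofReal (φ y) ∂(μm.bind K) :=
        (MeasureTheory.Measure.lintegral_bind hK.aemeasurable hm.ennreal_ofReal.aemeasurable).symm
    _ = _ := by rw [hinv]

lemma one_step {ι' : Type} [Fintype ι'] [DecidableEq ι']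
    (μj μj1 : Measure E) [IsProbabilityMeasure μj] [IsProbabilityMeasure μj1]
    (g : E → ℝ) (hgmeas : Measurable g) (hgpos : ∀ x, 0 < g x) (Cg : ℝ) (hgbdd : ∀ x, g x ≤ Cg)
    (Z : ℝ) (hZpos : 0 < Z)
    (hdens : ∀ f : E → ℝ, Measurable f → (∃ C, ∀ x, |f x| ≤ C) →
      (∫ x, f x ∂μj1) = (∫ x, f x * g x ∂μj) / Z)
    (K : E → Measure E) (hK : Measurable K) (hKp : ∀ x, IsProbabilityMeasure (K x))
    (hinv : μj.bind K = μj)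
    (Fi : Set E) (hFi : MeasurableSet Fi) (hKD : ∀ x ∈ Fi, K x Fiᶜ = 0)
    (G : ι' → Set E) (hGmeas : ∀ l, MeasurableSet (G l))
    (s : Finset ι') (hs : s.Nonempty)
    (hdecomp : Fi = ⋃ l ∈ s, G l)
    (hdisj : (s : Set ι').Pairwise (Function.onFun Disjoint G))
    (h : E → ℝ) (hm : Measurable h) (Ch : ℝ) (hb : ∀ x, |h x| ≤ Ch) :
    ∫ x in Fi, |∫ y, (g y / Z) * h y ∂(K x)| ∂μj
      ≤ (μj1 Fi).toReal
        * s.sup' hs (fun l => (μj1 (G l))⁻¹.toReal * ∫ x in G l, |h x| ∂μj1) := by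
  obtain ⟨x₀⟩ : Nonempty E := by
    by_contra hE
    rw [not_nonempty_iff] at hE
    have h1 : (μj) Set.univ = 1 := measure_univ
    rw [Set.univ_eq_empty_iff.mpr hE, measure_empty] at h1
    exact zero_ne_one h1
  have hCg : 0 ≤ Cg := le_trans (hgpos x₀).le (hgbdd x₀)
  have hCh : 0 ≤ Ch := le_trans (abs_nonneg _) (hb x₀)
  set φ : E → ℝ := Fi.indicator (fun y => (g y / Z) * |h y|) with hφdef
  have hφmeas : Measurable φ := ((hgmeas.div_const Z).mul hm.abs).indicator hFi
  have hφnn : ∀ y, 0 ≤ φ y := fun y => by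
    by_cases hy : y ∈ Fi
    · rw [hφdef, Set.indicator_of_mem hy]
      have := (hgpos y).le
      positivity
    · rw [hφdef, Set.indicator_of_notMem hy]
  have hφle : ∀ y, φ y ≤ Cg / Z * Ch := fun y => by
    by_cases hy : y ∈ Fi
    · rw [hφdef, Set.indicator_of_mem hy]
      exact mul_le_mul (by gcongr; exact hgbdd y) (hb y) (abs_nonneg _) (by positivity)
    · rw [hφdef, Set.indicator_of_notMem hy]
      positivity
  have hφbdd : ∀ y, |φ y| ≤ Cg / Z * Ch := fun y => by
    rw [abs_of_nonneg (hφnn y)]; exact hφle y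
  have hstep1 : ∀ x ∈ Fi, |∫ y, (g y / Z) * h y ∂(K x)| ≤ ∫ y, φ y ∂(K x) := by
    intro x hx
    have hKx := hKp x
    have hae : ∀ᵐ y ∂(K x), y ∈ Fi := by
      rw [ae_iff]
      exact hKD x hx
    have h2 : ∫ y, φ y ∂(K x) = ∫ y, (g y / Z) * |h y| ∂(K x) :=
      integral_congr_ae (hae.mono fun y hy => by rw [hφdef, Set.indicator_of_mem hy])
    rw [h2, ← Real.norm_eq_abs]
    refine (norm_integral_le_integral_norm _).trans (le_of_eq ?_)
    exact integral_congr_ae (Filter.Eventually.of_forall fun y => by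
      simp only [Real.norm_eq_abs, abs_mul]
      rw [abs_of_nonneg (by have := (hgpos y).le; positivity)])
  have hKint_meas : Measurable fun x => ∫ y, (g y / Z) * h y ∂(K x) :=
    aux_meas_kint hK hKp ((hgmeas.div_const Z).mul hm)
  have hφint_meas : Measurable fun x => ∫ y, φ y ∂(K x) := aux_meas_kint hK hKp hφmeas
  have hbd1 : ∀ x, |∫ y, (g y / Z) * h y ∂(K x)| ≤ Cg / Z * Ch := fun x => by
    have := hKp x
    have hn : ∀ y, ‖(g y / Z) * h y‖ ≤ Cg / Z * Ch := fun y => by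
      rw [Real.norm_eq_abs, abs_mul, abs_of_nonneg (by have := (hgpos y).le; positivity)]
      exact mul_le_mul (by gcongr; exact hgbdd y) (hb y) (abs_nonneg _) (by positivity)
    have h3 := norm_integral_le_of_norm_le_const (μ := K x)
      (f := fun y => (g y / Z) * h y) (Filter.Eventually.of_forall hn)
    rw [probReal_univ, mul_one, Real.norm_eq_abs] at h3
    exact h3
  have hbd2 : ∀ x, |∫ y, φ y ∂(K x)| ≤ Cg / Z * Ch := fun x => by
    have := hKp x
    have hn : ∀ y, ‖φ y‖ ≤ Cg / Z * Ch := fun y => by rw [Real.norm_eq_abs]; exact hφbdd y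
    have h3 := norm_integral_le_of_norm_le_const (μ := K x)
      (f := φ) (Filter.Eventually.of_forall hn)
    rw [probReal_univ, mul_one, Real.norm_eq_abs] at h3
    exact h3
  have hIleft : IntegrableOn (fun x => |∫ y, (g y / Z) * h y ∂(K x)|) Fi μj :=
    (aux_integrable hKint_meas.abs (C := Cg / Z * Ch)
      (fun x => by rw [abs_abs]; exact hbd1 x)).integrableOn
  have hφKint : Integrable (fun x => ∫ y, φ y ∂(K x)) μj := aux_integrable hφint_meas hbd2
  have hstep5 : ∫ x, φ x ∂μj = ∫ x in Fi, |h x| ∂μj1 := by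
    have hd := hdens (Fi.indicator fun y => |h y|) (hm.abs.indicator hFi)
      ⟨Ch, fun x => by
        by_cases hx : x ∈ Fi
        · rw [Set.indicator_of_mem hx, abs_abs]; exact hb x
        · rw [Set.indicator_of_notMem hx, abs_zero]; exact hCh⟩
    rw [integral_indicator hFi] at hd
    rw [hd, ← integral_div]
    apply integral_congr_ae
    filter_upwards with x
    by_cases hx : x ∈ Fi
    · rw [hφdef, Set.indicator_of_mem hx, Set.indicator_of_mem hx]; ring
    · rw [hφdef, Set.indicator_of_notMem hx, Set.indicator_of_notMem hx]; ring
  have habs_int : Integrable (fun x => |h x|) μj1 :=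
    aux_integrable hm.abs (C := Ch) (fun x => by rw [abs_abs]; exact hb x)
  have hstep6 : ∫ x in Fi, |h x| ∂μj1 = ∑ l ∈ s, ∫ x in G l, |h x| ∂μj1 := by
    rw [hdecomp]
    exact integral_biUnion_finset s (fun l _ => hGmeas l) hdisj
      (fun l _ => habs_int.integrableOn)
  set S := s.sup' hs (fun l => (μj1 (G l))⁻¹.toReal * ∫ x in G l, |h x| ∂μj1) with hSdef
  have hSnn : 0 ≤ S := by
    obtain ⟨l, hl⟩ := hs
    exact le_trans (mul_nonneg ENNReal.toReal_nonneg
      (integral_nonneg fun x => abs_nonneg _))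
      (Finset.le_sup' (fun l => (μj1 (G l))⁻¹.toReal * ∫ x in G l, |h x| ∂μj1) hl)
  have hterm : ∀ l ∈ s, ∫ x in G l, |h x| ∂μj1 ≤ (μj1 (G l)).toReal * S := by
    intro l hl
    have hle : (μj1 (G l))⁻¹.toReal * ∫ x in G l, |h x| ∂μj1 ≤ S :=
      Finset.le_sup' (fun l => (μj1 (G l))⁻¹.toReal * ∫ x in G l, |h x| ∂μj1) hl
    by_cases hc : μj1 (G l) = 0
    · have hz : μj1.restrict (G l) = 0 := Measure.restrict_eq_zero.mpr hc
      rw [hz, hc]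
      simp [hSnn]
    · have hcpos : 0 < (μj1 (G l)).toReal := ENNReal.toReal_pos hc (measure_ne_top _ _)
      calc ∫ x in G l, |h x| ∂μj1
          = (μj1 (G l)).toReal * ((μj1 (G l))⁻¹.toReal * ∫ x in G l, |h x| ∂μj1) := by
            rw [ENNReal.toReal_inv]; field_simp
        _ ≤ (μj1 (G l)).toReal * S := by gcongr
  have hsum : μj1 Fi = ∑ l ∈ s, μj1 (G l) := by
    rw [hdecomp]; exact measure_biUnion_finset hdisj (fun l _ => hGmeas l)
  calc ∫ x in Fi, |∫ y, (g y / Z) * h y ∂(K x)| ∂μj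
      ≤ ∫ x in Fi, (∫ y, φ y ∂(K x)) ∂μj :=
        setIntegral_mono_on hIleft hφKint.integrableOn hFi hstep1
    _ ≤ ∫ x, (∫ y, φ y ∂(K x)) ∂μj :=
        setIntegral_le_integral hφKint
          (Filter.Eventually.of_forall fun x => integral_nonneg hφnn)
    _ = ∫ x, φ x ∂μj := aux_invariance hK hKp hinv hφmeas hφnn hφbdd
    _ = ∫ x in Fi, |h x| ∂μj1 := hstep5
    _ = ∑ l ∈ s, ∫ x in G l, |h x| ∂μj1 := hstep6
    _ ≤ ∑ l ∈ s, (μj1 (G l)).toReal * S := Finset.sum_le_sum hterm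
    _ = (∑ l ∈ s, (μj1 (G l)).toReal) * S := (Finset.sum_mul _ _ _).symm
    _ = (μj1 Fi).toReal * S := by
        rw [hsum, ENNReal.toReal_sum (fun l _ => measure_ne_top _ _)]

/- Lemma 4.5 of the paper: local L₁-bounds for the propagator q̂_{j,k} in terms
   of the constants M_{j,k}(i) and A_{j,k}. -/
theorem stmt_12
    (n : ℕ) (μ : ℕ → Measure E)
    (hμprob : ∀ k, k ≤ n → IsProbabilityMeasure (μ k))
    (hμac : ∀ j k, j ≤ n → k ≤ n → μ j ≪ μ k)
    (g : ℕ → E → ℝ)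
    (hgmeas : ∀ k, Measurable (g k))
    (hgpos : ∀ k x, 0 < g k x)
    (hgbdd : ∀ k, ∃ C : ℝ, ∀ x, g k x ≤ C)
    (hgdens : ∀ k, k < n → ∀ f : E → ℝ, Measurable f → (∃ C : ℝ, ∀ x, |f x| ≤ C) →
      (∫ x, f x ∂(μ (k+1))) = (∫ x, f x * g k x ∂(μ k)) / (∫ x, g k x ∂(μ k)))
    (K : ℕ → E → Measure E)
    (hKprob : ∀ k x, IsProbabilityMeasure (K k x))
    (hKmeas : ∀ k (A : Set E), MeasurableSet A → Measurable fun x => K k x A)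
    (hKinv : ∀ k, k ≤ n → (μ k).bind (K k) = μ k)
    (F : ∀ k, I k → Set E)
    (hFmeas : ∀ k j, MeasurableSet (F k j))
    (hFpos : ∀ k, k ≤ n → ∀ j, 0 < μ 0 (F k j))
    (hFdisj : ∀ k, k ≤ n → ∀ j j' : I k, j ≠ j' → Disjoint (F k j) (F k j'))
    (hFcover : ∀ k, k ≤ n → (⋃ j : I k, F k j) = Set.univ)
    (p : ∀ j k : ℕ, I k → I j)
    (hp : ∀ j k, j < k → k ≤ n → ∀ l : I k, F k l ⊆ F j (p j k l))
    (hsne : ∀ (j k : ℕ) (_ : j < k) (_ : k ≤ n) (i : I j), (succSet p j k i).Nonempty)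
    (hD : ∀ k, 1 ≤ k → k ≤ n → ∀ (j : I k) (x : E), x ∉ F k j → K k x (F k j) = 0)
    (qhat : ℕ → ℕ → (E → ℝ) → E → ℝ)
    (hqdiag : ∀ k f, qhat k k f = f)
    (hqstep : ∀ j k, j < k → k ≤ n → ∀ (f : E → ℝ) (x : E),
      qhat j k f x = ∫ y, (g j y / (∫ z, g j z ∂(μ j))) * qhat (j+1) k f y ∂(K j x))
 :
    ∀ (j k : ℕ) (hjk : j < k) (hkn : k ≤ n), 1 ≤ j → ∀ f : E → ℝ, Measurable f → (∃ C : ℝ, ∀ x, |f x| ≤ C) →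
      (∀ i : I j,
        locNorm (muLoc (μ j) (F j i)) 1 (qhat j k f)
          ≤ ((succSet p j k i).sup' (hsne j k hjk hkn i) (Mprod μ F p j k))
            * ((succSet p j k i).sup' (hsne j k hjk hkn i) fun l =>
                locNorm (muLoc (μ k) (F k l)) 1 f))
      ∧ maxNorm μ F j 1 (qhat j k f)
          ≤ (Finset.univ.sup' Finset.univ_nonempty fun i : I j =>
              (succSet p j k i).sup' (hsne j k hjk hkn i) (Mprod μ F p j k))
            * maxNorm μ F k 1 f := by
  intro j k hjk hkn hj1 f hfm hfb
  -- preliminaries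
  have hKm : ∀ m : ℕ, Measurable (K m) := fun m =>
    Measure.measurable_of_measurable_coe _ (hKmeas m)
  have hFne : ∀ k', k' ≤ n → ∀ j' : I k', (F k' j').Nonempty := by
    intro k' hk' j'
    rw [Set.nonempty_iff_ne_empty]
    intro he
    have h0 := hFpos k' hk' j'
    rw [he, measure_empty] at h0
    exact lt_irrefl _ h0
  have hmem : ∀ (a b : ℕ) (i : I a) (l : I b), l ∈ succSet p a b i ↔ p a b l = i := by
    intro a b i l; simp [succSet]
  have hpuniq : ∀ (a b : ℕ), a < b → b ≤ n → ∀ (l : I b) (c : I a),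
      F b l ⊆ F a c → p a b l = c := by
    intro a b hab hbn l c hsub
    obtain ⟨x, hx⟩ := hFne b hbn l
    by_contra hne
    exact Set.disjoint_left.mp (hFdisj a (le_trans (le_of_lt hab) hbn) _ _ hne)
      (hp a b hab hbn l hx) (hsub hx)
  have hpcomp : ∀ (a b : ℕ), a + 1 < b → b ≤ n → ∀ l : I b,
      p a b l = p a (a+1) (p (a+1) b l) := by
    intro a b hab hbn l
    refine hpuniq a b (by omega) hbn l _ ?_
    exact Set.Subset.trans (hp (a+1) b (by omega) hbn l)
      (hp a (a+1) (by omega) (by omega) _)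
  have hKcompl : ∀ m, 1 ≤ m → m ≤ n → ∀ (i : I m), ∀ x ∈ F m i, K m x (F m i)ᶜ = 0 := by
    intro m hm1 hmn i x hx
    have hsub : (F m i)ᶜ ⊆ ⋃ i' ∈ Finset.univ.erase i, F m i' := by
      intro y hy
      have hy2 : y ∈ ⋃ i', F m i' := by rw [hFcover m hmn]; trivial
      obtain ⟨i', hi'⟩ := Set.mem_iUnion.mp hy2
      refine Set.mem_biUnion (Finset.mem_erase.mpr ⟨?_, Finset.mem_univ _⟩) hi'
      rintro rfl; exact hy hi'
    refine le_antisymm ?_ (zero_le)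
    refine le_trans (measure_mono hsub) ?_
    refine le_trans (measure_biUnion_finset_le _ _) ?_
    refine le_of_eq (Finset.sum_eq_zero ?_)
    intro i' hi'
    refine hD m hm1 hmn i' x ?_
    intro hxin
    have heq : i' = i := by
      by_contra hne
      exact Set.disjoint_left.mp (hFdisj m hmn i' i hne) hxin hx
    exact (Finset.mem_erase.mp hi').1 heq
  have hFdecomp : ∀ a, a + 1 ≤ n → ∀ i : I a,
      F a i = ⋃ l ∈ succSet p a (a+1) i, F (a+1) l := by
    intro a han i
    apply Set.Subset.antisymm
    · intro x hx
      have hx2 : x ∈ ⋃ l, F (a+1) l := by rw [hFcover (a+1) han]; trivial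
      obtain ⟨l, hl⟩ := Set.mem_iUnion.mp hx2
      have hpl : p a (a+1) l = i := by
        by_contra hne
        exact Set.disjoint_left.mp (hFdisj a (by omega) _ _ hne)
          (hp a (a+1) (by omega) han l hl) hx
      exact Set.mem_biUnion ((hmem a (a+1) i l).mpr hpl) hl
    · intro x hx
      obtain ⟨l, hl, hxl⟩ := Set.mem_iUnion₂.mp hx
      have hs := hp a (a+1) (by omega) han l hxl
      rwa [(hmem _ _ _ _).mp hl] at hs
  have hloc : ∀ (ν : Measure E) (f' : E → ℝ), locNorm ν 1 f' = ∫ x, |f' x| ∂ν := by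
    intro ν f'; simp [locNorm]
  have hlocmu : ∀ (m : ℕ) (S : Set E) (f' : E → ℝ),
      locNorm (muLoc (μ m) S) 1 f' = (μ m S)⁻¹.toReal * ∫ x in S, |f' x| ∂(μ m) := by
    intro m S f'
    rw [hloc, muLoc, integral_smul_measure, smul_eq_mul]
  have hlocnn : ∀ (ν : Measure E) (f' : E → ℝ), 0 ≤ locNorm ν 1 f' := fun ν f' =>
    Real.rpow_nonneg (integral_nonneg fun x => Real.rpow_nonneg (abs_nonneg _) _) _
  have hmr_nn : ∀ (a : ℕ) (i : I a), 0 ≤ mRatio μ F a i := fun a i =>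
    div_nonneg ENNReal.toReal_nonneg ENNReal.toReal_nonneg
  have hMp_nn : ∀ (a b : ℕ) (l : I b), 0 ≤ Mprod μ F p a b l := fun a b l =>
    Finset.prod_nonneg fun r _ => hmr_nn r _
  have hZpos : ∀ m, m ≤ n → 0 < ∫ z, g m z ∂(μ m) := by
    intro m hmn
    haveI := hμprob m hmn
    obtain ⟨Cg, hCg⟩ := hgbdd m
    have hint : Integrable (g m) (μ m) := aux_integrable (hgmeas m)
      (C := Cg) (fun x => by rw [abs_of_pos (hgpos m x)]; exact hCg x)
    rw [integral_pos_iff_support_of_nonneg (fun x => (hgpos m x).le) hint]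
    have hsupp : Function.support (g m) = Set.univ :=
      Set.eq_univ_of_forall fun x => (hgpos m x).ne'
    rw [hsupp, measure_univ]
    exact zero_lt_one
  -- measurability and boundedness of the propagators
  have hqreg : ∀ d b a (_ : a + d = b) (_ : b ≤ n),
      Measurable (qhat a b f) ∧ ∃ C, ∀ x, |qhat a b f x| ≤ C := by
    intro d
    induction d with
    | zero =>
      intro b a hab hbn
      obtain rfl : a = b := by omega
      rw [hqdiag]
      exact ⟨hfm, hfb⟩
    | succ d IH =>
      intro b a hab hbn
      obtain ⟨hm1, C1, hC1⟩ := IH b (a+1) (by omega) hbn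
      have hZ := hZpos a (by omega)
      obtain ⟨Cg, hCg⟩ := hgbdd a
      have hrw : qhat a b f = fun x =>
          ∫ y, (g a y / (∫ z, g a z ∂(μ a))) * qhat (a+1) b f y ∂(K a x) :=
        funext fun x => hqstep a b (by omega) hbn f x
      set Z := ∫ z, g a z ∂(μ a) with hZdef
      have hintm : Measurable fun y => (g a y / Z) * qhat (a+1) b f y :=
        ((hgmeas a).div_const Z).mul hm1
      constructor
      · rw [hrw]; exact aux_meas_kint (hKm a) (hKprob a) hintm
      · refine ⟨Cg / Z * C1, fun x => ?_⟩
        rw [hrw]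
        haveI := hKprob a x
        have hn : ∀ y, ‖(g a y / Z) * qhat (a+1) b f y‖ ≤ Cg / Z * C1 := fun y => by
          have hC1nn : 0 ≤ C1 := le_trans (abs_nonneg _) (hC1 y)
          have hCgnn : 0 ≤ Cg := le_trans (hgpos a y).le (hCg y)
          rw [Real.norm_eq_abs, abs_mul, abs_of_nonneg (by have := (hgpos a y).le; positivity)]
          exact mul_le_mul (by gcongr; exact hCg y) (hC1 y) (abs_nonneg _) (by positivity)
        have h3 := norm_integral_le_of_norm_le_const (μ := K a x)
          (f := fun y => (g a y / Z) * qhat (a+1) b f y) (Filter.Eventually.of_forall hn)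
        rw [probReal_univ, mul_one, Real.norm_eq_abs] at h3
        exact h3
  -- the one-step estimate, in normalized form
  have honestep : ∀ (a : ℕ) (_ : 1 ≤ a) (_ : a + 1 ≤ n) (b : ℕ) (_ : a < b) (_ : b ≤ n)
      (i : I a),
      locNorm (muLoc (μ a) (F a i)) 1 (qhat a b f)
        ≤ mRatio μ F a i *
          (succSet p a (a+1) i).sup' (hsne a (a+1) (by omega) (by omega) i)
            (fun l' => locNorm (muLoc (μ (a+1)) (F (a+1) l')) 1 (qhat (a+1) b f)) := by
    intro a ha1 han b hab hbn i
    haveI := hμprob a (by omega)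
    haveI := hμprob (a+1) han
    obtain ⟨hqm, Cq, hCq⟩ := hqreg (b - (a+1)) b (a+1) (by omega) hbn
    obtain ⟨Cg, hCg⟩ := hgbdd a
    have hZ := hZpos a (by omega)
    have hdisjp : ((succSet p a (a+1) i : Finset (I (a+1))) : Set (I (a+1))).Pairwise
        (Function.onFun Disjoint (F (a+1))) := fun l _ l' _ hll' => hFdisj (a+1) han l l' hll'
    have hone := one_step (μ a) (μ (a+1)) (g a) (hgmeas a) (hgpos a) Cg hCg
      (∫ z, g a z ∂(μ a)) hZ (hgdens a (by omega)) (K a) (hKm a) (hKprob a)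
      (hKinv a (by omega)) (F a i) (hFmeas a i) (hKcompl a ha1 (by omega) i)
      (F (a+1)) (hFmeas (a+1)) (succSet p a (a+1) i) (hsne a (a+1) (by omega) han i)
      (hFdecomp a han i) hdisjp (qhat (a+1) b f) hqm Cq hCq
    have hrw : qhat a b f = fun x =>
        ∫ y, (g a y / (∫ z, g a z ∂(μ a))) * qhat (a+1) b f y ∂(K a x) :=
      funext fun x => hqstep a b hab hbn f x
    rw [hlocmu, hrw]
    refine le_trans (mul_le_mul_of_nonneg_left hone ENNReal.toReal_nonneg) (le_of_eq ?_)
    simp only [hlocmu]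
    rw [mRatio, ENNReal.toReal_inv]
    ring
  -- part 1 by induction on k - j - 1
  have main : ∀ d a (_ : a + d + 1 = k) (_ : 1 ≤ a), ∀ i : I a,
      locNorm (muLoc (μ a) (F a i)) 1 (qhat a k f)
        ≤ (succSet p a k i).sup' (hsne a k (by omega) hkn i) (Mprod μ F p a k) *
          (succSet p a k i).sup' (hsne a k (by omega) hkn i)
            (fun l => locNorm (muLoc (μ k) (F k l)) 1 f) := by
    intro d
    induction d with
    | zero =>
      intro a ha hA i
      obtain rfl : k = a + 1 := by omega
      have h1 := honestep a hA hkn (a+1) (by omega) hkn i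
      have h2 : ∀ l' ∈ succSet p a (a+1) i,
          locNorm (muLoc (μ (a+1)) (F (a+1) l')) 1 (qhat (a+1) (a+1) f)
            = locNorm (muLoc (μ (a+1)) (F (a+1) l')) 1 f := fun l' _ => by rw [hqdiag]
      rw [Finset.sup'_congr (hsne a (a+1) (by omega) hkn i) rfl h2] at h1
      refine le_trans h1 (le_of_eq ?_)
      have hval : ∀ l ∈ succSet p a (a+1) i,
          Mprod μ F p a (a+1) l = mRatio μ F a i := by
        intro l hl
        rw [Mprod, Nat.Ico_succ_singleton, Finset.prod_singleton, (hmem _ _ _ _).mp hl]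
      rw [Finset.sup'_congr (hsne a (a+1) (by omega) hkn i) rfl hval, Finset.sup'_const]
    | succ d IH =>
      intro a ha hA i
      have hk2 : a + 1 < k := by omega
      have h1 := honestep a hA (by omega) k (by omega) hkn i
      obtain ⟨l', hl'mem, hl'eq⟩ := Finset.exists_mem_eq_sup'
        (hsne a (a+1) (by omega) (by omega) i)
        (fun l' => locNorm (muLoc (μ (a+1)) (F (a+1) l')) 1 (qhat (a+1) k f))
      rw [hl'eq] at h1
      have h2 := IH (a+1) (by omega) (by omega) l'
      have h3 : locNorm (muLoc (μ a) (F a i)) 1 (qhat a k f)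
          ≤ mRatio μ F a i *
            ((succSet p (a+1) k l').sup' (hsne (a+1) k (by omega) hkn l')
                (Mprod μ F p (a+1) k) *
              (succSet p (a+1) k l').sup' (hsne (a+1) k (by omega) hkn l')
                (fun l => locNorm (muLoc (μ k) (F k l)) 1 f)) :=
        le_trans h1 (mul_le_mul_of_nonneg_left h2 (hmr_nn a i))
      obtain ⟨lstar, hlsmem, hlseq⟩ := Finset.exists_mem_eq_sup'
        (hsne (a+1) k (by omega) hkn l') (Mprod μ F p (a+1) k)
      rw [hlseq] at h3
      have hpl : p (a+1) k lstar = l' := (hmem _ _ _ _).mp hlsmem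
      have hpl2 : p a (a+1) l' = i := (hmem _ _ _ _).mp hl'mem
      have hpk : p a k lstar = i := by rw [hpcomp a k hk2 hkn lstar, hpl, hpl2]
      have hMeq : mRatio μ F a i * Mprod μ F p (a+1) k lstar = Mprod μ F p a k lstar := by
        rw [Mprod, Mprod, Finset.prod_eq_prod_Ico_succ_bot (show a < k by omega)
          (fun r => mRatio μ F r (p r k lstar)), hpk]
      have hlsmem' : lstar ∈ succSet p a k i := (hmem _ _ _ _).mpr hpk
      have hsub : ∀ l ∈ succSet p (a+1) k l', l ∈ succSet p a k i := by
        intro l hl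
        refine (hmem _ _ _ _).mpr ?_
        rw [hpcomp a k hk2 hkn l, (hmem _ _ _ _).mp hl, hpl2]
      refine le_trans h3 ?_
      rw [← mul_assoc, hMeq]
      have hb1 : Mprod μ F p a k lstar
          ≤ (succSet p a k i).sup' (hsne a k (by omega) hkn i) (Mprod μ F p a k) :=
        Finset.le_sup' _ hlsmem'
      have hb2 : (succSet p (a+1) k l').sup' (hsne (a+1) k (by omega) hkn l')
            (fun l => locNorm (muLoc (μ k) (F k l)) 1 f)
          ≤ (succSet p a k i).sup' (hsne a k (by omega) hkn i)
            (fun l => locNorm (muLoc (μ k) (F k l)) 1 f) :=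
        Finset.sup'_le _ _ fun l hl => Finset.le_sup'
          (fun l => locNorm (muLoc (μ k) (F k l)) 1 f) (hsub l hl)
      have hb2nn : 0 ≤ (succSet p (a+1) k l').sup' (hsne (a+1) k (by omega) hkn l')
          (fun l => locNorm (muLoc (μ k) (F k l)) 1 f) := by
        obtain ⟨l0, hl0⟩ := hsne (a+1) k (by omega) hkn l'
        exact le_trans (hlocnn _ _)
          (Finset.le_sup' (fun l => locNorm (muLoc (μ k) (F k l)) 1 f) hl0)
      have hSMnn : 0 ≤ (succSet p a k i).sup' (hsne a k (by omega) hkn i) (Mprod μ F p a k) :=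
        le_trans (hMp_nn a k lstar) hb1
      exact mul_le_mul hb1 hb2 hb2nn hSMnn
  have part1 : ∀ i : I j,
      locNorm (muLoc (μ j) (F j i)) 1 (qhat j k f)
        ≤ ((succSet p j k i).sup' (hsne j k hjk hkn i) (Mprod μ F p j k))
          * ((succSet p j k i).sup' (hsne j k hjk hkn i) fun l =>
              locNorm (muLoc (μ k) (F k l)) 1 f) :=
    fun i => main (k - j - 1) j (by omega) hj1 i
  refine ⟨part1, ?_⟩
  -- part 2
  rw [maxNorm, maxNorm]
  refine Finset.sup'_le _ _ fun i _ => ?_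
  refine le_trans (part1 i) ?_
  have hAnn : 0 ≤ (succSet p j k i).sup' (hsne j k hjk hkn i) (Mprod μ F p j k) := by
    obtain ⟨l0, hl0⟩ := hsne j k hjk hkn i
    exact le_trans (hMp_nn j k l0) (Finset.le_sup' _ hl0)
  have hb1 : (succSet p j k i).sup' (hsne j k hjk hkn i) (Mprod μ F p j k)
      ≤ Finset.univ.sup' Finset.univ_nonempty fun i : I j =>
        (succSet p j k i).sup' (hsne j k hjk hkn i) (Mprod μ F p j k) :=
    Finset.le_sup' (fun i : I j =>
      (succSet p j k i).sup' (hsne j k hjk hkn i) (Mprod μ F p j k)) (Finset.mem_univ i)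
  have hb2 : ((succSet p j k i).sup' (hsne j k hjk hkn i) fun l =>
        locNorm (muLoc (μ k) (F k l)) 1 f)
      ≤ Finset.univ.sup' Finset.univ_nonempty fun l : I k =>
        locNorm (muLoc (μ k) (F k l)) 1 f :=
    Finset.sup'_le _ _ fun l _ => Finset.le_sup'
      (fun l : I k => locNorm (muLoc (μ k) (F k l)) 1 f) (Finset.mem_univ l)
  have hb2nn : 0 ≤ (succSet p j k i).sup' (hsne j k hjk hkn i) fun l =>
      locNorm (muLoc (μ k) (F k l)) 1 f := by
    obtain ⟨l0, hl0⟩ := hsne j k hjk hkn i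
    exact le_trans (hlocnn _ _)
      (Finset.le_sup' (fun l : I k => locNorm (muLoc (μ k) (F k l)) 1 f) hl0)
  exact mul_le_mul hb1 hb2 hb2nn (le_trans hAnn hb1)
end

section
/- In the partition setting under Assumptions (D), (M) and (B), for all 1 ≤ k < n, every bounded measurable f, every i ∈ I_k and every p ≥ 1: ‖q̂_{k,k+1}(f)‖_{k,i,2p}^{2p} ≤ m_{k,k+1}(i)^{2p}·γ^{2p−2}·( α·max_{l∈s_{k+1}(i)} ‖f‖_{k+1,l,2p}^{2p} + β·max_{l∈s_{k+1}(i)} ‖f‖_{k+1,l,p}^{2p} ). Consequently ‖q̂_{k,k+1}(f)‖_{k,2p}^{2p} ≤ A_{k,k+1}^{2p}·γ^{2p−2}·(α+β)·‖f‖_{k+1,2p}^{2p}. -/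
open MeasureTheory

variable {E : Type} [MeasurableSpace E]
variable {I : ℕ → Type} [∀ k, Fintype (I k)] [∀ k, Nonempty (I k)] [∀ k, DecidableEq (I k)]

namespace Stmt15Aux

lemma integral_muLoc (μ : Measure E) (S : Set E) (f : E → ℝ) :
    ∫ x, f x ∂(muLoc μ S) = (μ S).toReal⁻¹ * ∫ x in S, f x ∂μ := by
  rw [muLoc, integral_smul_measure, ENNReal.toReal_inv, smul_eq_mul]

lemma muLoc_prob (μ : Measure E) {S : Set E} (h0 : μ S ≠ 0) (ht : μ S ≠ ⊤) :
    IsProbabilityMeasure (muLoc μ S) := by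
  constructor
  rw [muLoc, Measure.smul_apply, Measure.restrict_apply_univ, smul_eq_mul,
    ENNReal.inv_mul_cancel h0 ht]

lemma integrable_of_bdd {ν : Measure E} [IsFiniteMeasure ν] {h : E → ℝ} {C : ℝ}
    (hm : AEStronglyMeasurable h ν) (hC : ∀ x, |h x| ≤ C) : Integrable h ν :=
  (integrable_const C).mono' hm (Filter.Eventually.of_forall fun x => by
    simpa [Real.norm_eq_abs] using hC x)

lemma ae_muLoc {μ : Measure E} {S : Set E} (hS : MeasurableSet S) :
    ∀ᵐ x ∂(muLoc μ S), x ∈ S := by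
  rw [muLoc]
  exact Measure.ae_smul_measure (ae_restrict_mem hS) _

lemma locNorm_nonneg (ν : Measure E) (p : ℝ) (f : E → ℝ) : 0 ≤ locNorm ν p f :=
  Real.rpow_nonneg (integral_nonneg fun x => Real.rpow_nonneg (abs_nonneg _) _) _

lemma locNorm_rpow {ν : Measure E} {p : ℝ} (hp : 0 < p) (f : E → ℝ) :
    locNorm ν p f ^ p = ∫ x, |f x| ^ p ∂ν := by
  rw [locNorm, ← Real.rpow_mul (integral_nonneg fun x => Real.rpow_nonneg (abs_nonneg _) _),
    one_div, inv_mul_cancel₀ hp.ne', Real.rpow_one]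

lemma sq_eq_rpow (x : ℝ) : x ^ (2:ℕ) = x ^ ((2:ℝ)) := by
  rw [show ((2:ℝ)) = ((2:ℕ):ℝ) by norm_num, Real.rpow_natCast]

lemma measurable_kernel_integral {K : E → Measure E} (hKp : ∀ x, IsProbabilityMeasure (K x))
    (hKm : ∀ A : Set E, MeasurableSet A → Measurable fun x => K x A)
    {h : E → ℝ} (hm : Measurable h) : Measurable fun x => ∫ y, h y ∂(K x) := by
  let κ : ProbabilityTheory.Kernel E E := ⟨K, Measure.measurable_of_measurable_coe K hKm⟩
  have : ProbabilityTheory.IsMarkovKernel κ := ⟨fun x => hKp x⟩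
  have h2 := MeasureTheory.StronglyMeasurable.integral_kernel_prod_right
      (κ := κ) (f := fun (_ : E) (y : E) => h y)
      ((hm.comp measurable_snd).stronglyMeasurable)
  exact h2.measurable

lemma holder_G {ν : Measure E} [IsProbabilityMeasure ν] {G f : E → ℝ} {p B : ℝ}
    (hp : 1 ≤ p) (hGm : Measurable G) (hGnn : ∀ x, 0 ≤ G x)
    (hfm : Measurable f) {Cf : ℝ} (hCf : ∀ x, |f x| ≤ Cf)
    (hBnn : 0 ≤ B) (hGB : ∀ᵐ y ∂ν, G y ≤ B) :
    ∫ y, G y * |f y| ∂ν ≤ B ^ (1 - 1/p) * (∫ y, G y * |f y| ^ p ∂ν) ^ (1/p) := by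
  rcases eq_or_lt_of_le hp with rfl | hp1
  · simp [Real.rpow_one]
  · have hp0 : (0:ℝ) < p := lt_trans one_pos hp1
    have h1mp : (0:ℝ) ≤ 1 - 1/p := sub_nonneg.mpr ((div_le_one hp0).mpr hp)
    have hmr : ∀ (c : ℝ), 0 ≤ c → Measurable fun x => G x ^ c := fun c hc =>
      (Real.continuous_rpow_const hc).measurable.comp hGm
    set q : ℝ := p / (p - 1) with hq
    have hpq : q.HolderConjugate p := (Real.HolderConjugate.conjExponent hp1).symm
    have hqinv : 1 / q = 1 - 1 / p := by
      rw [hq]; field_simp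
    set u : E → ℝ := fun y => G y ^ (1 - 1/p) with hu
    set v : E → ℝ := fun y => G y ^ (1/p) * |f y| with hv
    have hum : Measurable u := hmr _ h1mp
    have hvm : Measurable v := (hmr _ (by positivity)).mul hfm.abs
    have hubd : ∀ᵐ y ∂ν, ‖u y‖ ≤ B ^ (1 - 1/p) := by
      filter_upwards [hGB] with y hy
      rw [Real.norm_eq_abs, abs_of_nonneg (Real.rpow_nonneg (hGnn y) _)]
      exact Real.rpow_le_rpow (hGnn y) hy h1mp
    have hvbd : ∀ᵐ y ∂ν, ‖v y‖ ≤ B ^ (1/p) * Cf := by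
      filter_upwards [hGB] with y hy
      rw [Real.norm_eq_abs, abs_of_nonneg (mul_nonneg (Real.rpow_nonneg (hGnn y) _) (abs_nonneg _))]
      exact mul_le_mul (Real.rpow_le_rpow (hGnn y) hy (by positivity)) (hCf y) (abs_nonneg _)
        (Real.rpow_nonneg hBnn _)
    have hmemu : MemLp u (ENNReal.ofReal q) ν :=
      MemLp.of_bound hum.aestronglyMeasurable _ hubd
    have hmemv : MemLp v (ENNReal.ofReal p) ν :=
      MemLp.of_bound hvm.aestronglyMeasurable _ hvbd
    have key := integral_mul_le_Lp_mul_Lq_of_nonneg hpq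
      (Filter.Eventually.of_forall fun y => Real.rpow_nonneg (hGnn y) _)
      (Filter.Eventually.of_forall fun y =>
        mul_nonneg (Real.rpow_nonneg (hGnn y) _) (abs_nonneg _)) hmemu hmemv
    have huv : ∀ y, u y * v y = G y * |f y| := by
      intro y
      rw [hu, hv, ← mul_assoc, ← Real.rpow_add' (hGnn y) (by norm_num), sub_add_cancel,
        Real.rpow_one]
    have huq : ∀ y, u y ^ q = G y := by
      intro y
      rw [hu, ← Real.rpow_mul (hGnn y)]
      have : (1 - 1/p) * q = 1 := by
        rw [← hqinv, one_div_mul_cancel hpq.ne_zero]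
      rw [this, Real.rpow_one]
    have hvp : ∀ y, v y ^ p = G y * |f y| ^ p := by
      intro y
      rw [hv, Real.mul_rpow (Real.rpow_nonneg (hGnn y) _) (abs_nonneg _),
        ← Real.rpow_mul (hGnn y), one_div, inv_mul_cancel₀ hp0.ne', Real.rpow_one]
    simp only [hu, hv] at huv huq hvp
    simp only [huv, huq, hvp] at key
    refine le_trans key ?_
    rw [hqinv]
    refine mul_le_mul_of_nonneg_right ?_
      (Real.rpow_nonneg (integral_nonneg fun y =>
        mul_nonneg (hGnn y) (Real.rpow_nonneg (abs_nonneg _) _)) _)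
    refine Real.rpow_le_rpow (integral_nonneg fun y => hGnn y) ?_ h1mp
    calc ∫ y, G y ∂ν ≤ ∫ _y, B ∂ν := by
          refine integral_mono_ae ?_ (integrable_const B) hGB
          refine (integrable_const B).mono' hGm.aestronglyMeasurable ?_
          filter_upwards [hGB] with y hy
          rw [Real.norm_eq_abs, abs_of_nonneg (hGnn y)]; exact hy
      _ = B := by simp

lemma muLoc_integral_le_sup {ν : Measure E} [IsFiniteMeasure ν] {ι : Type}
    {s : Finset ι} (hs : s.Nonempty) {T : ι → Set E} (hTm : ∀ l, MeasurableSet (T l))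
    (hdisj : ∀ l l', l ≠ l' → Disjoint (T l) (T l')) (hpos : ∀ l ∈ s, ν (T l) ≠ 0)
    {h : E → ℝ} (hm : Measurable h) (hnn : ∀ x, 0 ≤ h x) {C : ℝ} (hC : ∀ x, |h x| ≤ C) :
    ∫ x, h x ∂(muLoc ν (⋃ l ∈ s, T l)) ≤ s.sup' hs fun l => ∫ x, h x ∂(muLoc ν (T l)) := by
  set S : Set E := ⋃ l ∈ s, T l with hS
  have hint : ∀ l : ι, IntegrableOn h (T l) ν := fun l =>
    (integrable_const C).mono' hm.aestronglyMeasurable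
      (Filter.Eventually.of_forall fun x => by simpa [Real.norm_eq_abs] using hC x)
  have hsum : ∫ x in S, h x ∂ν = ∑ l ∈ s, ∫ x in T l, h x ∂ν :=
    integral_biUnion_finset s (fun l _ => hTm l)
      (fun l _ l' _ hne => hdisj l l' hne) (fun l _ => hint l)
  have hνS : ν S = ∑ l ∈ s, ν (T l) :=
    measure_biUnion_finset (fun l _ l' _ hne => hdisj l l' hne) (fun l _ => hTm l)
  have hfin : ∀ l : ι, ν (T l) ≠ ⊤ := fun l => measure_ne_top ν _
  have hνSR : (ν S).toReal = ∑ l ∈ s, (ν (T l)).toReal := by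
    rw [hνS, ENNReal.toReal_sum (fun l _ => hfin l)]
  obtain ⟨l₀, hl₀⟩ := hs
  have hνS0 : (ν S).toReal ≠ 0 := by
    have : ν (T l₀) ≤ ν S := measure_mono (Set.subset_biUnion_of_mem hl₀)
    have hpos' : 0 < (ν S).toReal := by
      refine ENNReal.toReal_pos (fun h0 => hpos l₀ hl₀ (le_antisymm (h0 ▸ this) (by simp))) ?_
      exact measure_ne_top ν _
    exact hpos'.ne'
  set M := s.sup' ⟨l₀, hl₀⟩ fun l => ∫ x, h x ∂(muLoc ν (T l)) with hM
  have hMnn : 0 ≤ M := le_trans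
    (integral_nonneg (fun x => hnn x) : (0:ℝ) ≤ ∫ x, h x ∂(muLoc ν (T l₀)))
    (Finset.le_sup' (fun l => ∫ x, h x ∂(muLoc ν (T l))) hl₀)
  have hterm : ∀ l ∈ s, ∫ x in T l, h x ∂ν ≤ (ν (T l)).toReal * M := by
    intro l hl
    have h1 : ∫ x, h x ∂(muLoc ν (T l)) ≤ M :=
      Finset.le_sup' (fun l => ∫ x, h x ∂(muLoc ν (T l))) hl
    have h2 : ∫ x in T l, h x ∂ν = (ν (T l)).toReal * ∫ x, h x ∂(muLoc ν (T l)) := by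
      rw [integral_muLoc, ← mul_assoc, mul_inv_cancel₀ ?_, one_mul]
      · exact ENNReal.toReal_ne_zero.mpr ⟨hpos l hl, hfin l⟩
    rw [h2]
    exact mul_le_mul_of_nonneg_left h1 ENNReal.toReal_nonneg
  calc ∫ x, h x ∂(muLoc ν S) = (ν S).toReal⁻¹ * ∫ x in S, h x ∂ν := integral_muLoc ν S h
    _ ≤ (ν S).toReal⁻¹ * ((ν S).toReal * M) := by
        refine mul_le_mul_of_nonneg_left ?_ (by positivity)
        rw [hsum, hνSR, Finset.sum_mul]
        exact Finset.sum_le_sum hterm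
    _ = M := by field_simp

end Stmt15Aux
open Stmt15Aux in
/- Lemma 4.8 of the paper: one-step local L_{2p}-bounds for q̂_{k,k+1} under
   local mixing and the uniform bound γ on restricted relative densities. -/
theorem stmt_15
    (n : ℕ) (μ : ℕ → Measure E)
    (hμprob : ∀ k, k ≤ n → IsProbabilityMeasure (μ k))
    (hμac : ∀ j k, j ≤ n → k ≤ n → μ j ≪ μ k)
    (g : ℕ → E → ℝ)
    (hgmeas : ∀ k, Measurable (g k))
    (hgpos : ∀ k x, 0 < g k x)
    (hgbdd : ∀ k, ∃ C : ℝ, ∀ x, g k x ≤ C)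
    (hgdens : ∀ k, k < n → ∀ f : E → ℝ, Measurable f → (∃ C : ℝ, ∀ x, |f x| ≤ C) →
      (∫ x, f x ∂(μ (k+1))) = (∫ x, f x * g k x ∂(μ k)) / (∫ x, g k x ∂(μ k)))
    (K : ℕ → E → Measure E)
    (hKprob : ∀ k x, IsProbabilityMeasure (K k x))
    (hKmeas : ∀ k (A : Set E), MeasurableSet A → Measurable fun x => K k x A)
    (hKinv : ∀ k, k ≤ n → (μ k).bind (K k) = μ k)
    (F : ∀ k, I k → Set E)
    (hFmeas : ∀ k j, MeasurableSet (F k j))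
    (hFpos : ∀ k, k ≤ n → ∀ j, 0 < μ 0 (F k j))
    (hFdisj : ∀ k, k ≤ n → ∀ j j' : I k, j ≠ j' → Disjoint (F k j) (F k j'))
    (hFcover : ∀ k, k ≤ n → (⋃ j : I k, F k j) = Set.univ)
    (p : ∀ j k : ℕ, I k → I j)
    (hp : ∀ j k, j < k → k ≤ n → ∀ l : I k, F k l ⊆ F j (p j k l))
    (hsne : ∀ (j k : ℕ) (_ : j < k) (_ : k ≤ n) (i : I j), (succSet p j k i).Nonempty)
    (hD : ∀ k, 1 ≤ k → k ≤ n → ∀ (j : I k) (x : E), x ∉ F k j → K k x (F k j) = 0)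
    (qhat : ℕ → ℕ → (E → ℝ) → E → ℝ)
    (hqdiag : ∀ k f, qhat k k f = f)
    (hqstep : ∀ j k, j < k → k ≤ n → ∀ (f : E → ℝ) (x : E),
      qhat j k f x = ∫ y, (g j y / (∫ z, g j z ∂(μ j))) * qhat (j+1) k f y ∂(K j x))
    (α β : ℝ) (hα : 0 < α) (hβ0 : 0 ≤ β) (hβ1 : β ≤ 1)
    (hM : ∀ k, 1 ≤ k → k < n → ∀ (i : I k) (f : E → ℝ),
      Measurable f → (∃ C : ℝ, ∀ x, |f x| ≤ C) →
      (locNorm (muLoc (μ k) (F k i)) 2 (qhat k (k+1) f))^2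
        ≤ (mRatio μ F k i)^2 *
            (α * (locNorm (muLoc (μ (k+1)) (F k i)) 2 f)^2
              + β * (∫ x, f x ∂(muLoc (μ (k+1)) (F k i)))^2))
    (γ : ℝ) (hγ : 1 ≤ γ)
    (hB : ∀ k, k < n → ∀ (j : I k) (x : E), x ∈ F k j →
      ((μ k (F k j)).toReal / (μ (k+1) (F k j)).toReal)
        * (g k x / (∫ z, g k z ∂(μ k))) ≤ γ)
 :
    ∀ (k : ℕ), 1 ≤ k → ∀ (hkn : k < n) (preal : ℝ), 1 ≤ preal →
      ∀ f : E → ℝ, Measurable f → (∃ C : ℝ, ∀ x, |f x| ≤ C) →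
      (∀ i : I k,
        (locNorm (muLoc (μ k) (F k i)) (2*preal) (qhat k (k+1) f)) ^ (2*preal)
          ≤ (mRatio μ F k i) ^ (2*preal) * γ ^ (2*preal - 2) *
              (α * ((succSet p k (k+1) i).sup' (hsne k (k+1) (Nat.lt_succ_self k) hkn i)
                      fun l => (locNorm (muLoc (μ (k+1)) (F (k+1) l)) (2*preal) f) ^ (2*preal))
               + β * ((succSet p k (k+1) i).sup' (hsne k (k+1) (Nat.lt_succ_self k) hkn i)
                      fun l => (locNorm (muLoc (μ (k+1)) (F (k+1) l)) preal f) ^ (2*preal))))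
      ∧ (maxNorm μ F k (2*preal) (qhat k (k+1) f)) ^ (2*preal)
          ≤ (Finset.univ.sup' Finset.univ_nonempty fun i : I k => mRatio μ F k i) ^ (2*preal)
            * γ ^ (2*preal - 2) * (α + β)
            * (maxNorm μ F (k+1) (2*preal) f) ^ (2*preal) := by
  intro k hk1 hkn preal hpreal f hfm hfbdd
  obtain ⟨C0, hC0⟩ := hfbdd
  set Cf : ℝ := max C0 0 with hCf_def
  have hCf0 : (0:ℝ) ≤ Cf := le_max_right _ _
  have hCf : ∀ x, |f x| ≤ Cf := fun x => le_trans (hC0 x) (le_max_left _ _)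
  have hkn' : k ≤ n := le_of_lt hkn
  have hk1n : k + 1 ≤ n := hkn
  have hγ0 : (0:ℝ) < γ := lt_of_lt_of_le one_pos hγ
  haveI hPk : IsProbabilityMeasure (μ k) := hμprob k hkn'
  haveI hPk1 : IsProbabilityMeasure (μ (k+1)) := hμprob (k+1) hk1n
  -- all partition sets have positive measure under every μ_m, m ≤ n
  have hposF : ∀ (m j : ℕ), j ≤ n → m ≤ n → ∀ a : I j, μ m (F j a) ≠ 0 := by
    intro m j hj hm a h0
    exact absurd (hμac 0 m (Nat.zero_le n) hm h0) (hFpos j hj a).ne'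
  have hp0 : (0:ℝ) < preal := lt_of_lt_of_le one_pos hpreal
  have h2p0 : (0:ℝ) < 2 * preal := by linarith
  -- the normalized density Gb = g k / μ_k(g k)
  obtain ⟨Cg, hCg⟩ := hgbdd k
  set c : ℝ := ∫ z, g k z ∂(μ k) with hc_def
  have hgi : Integrable (g k) (μ k) :=
    integrable_of_bdd (hgmeas k).aestronglyMeasurable (C := Cg)
      (fun x => by rw [abs_of_nonneg (hgpos k x).le]; exact hCg x)
  have hc : 0 < c := by
    rw [hc_def]
    refine (integral_pos_iff_support_of_nonneg (fun x => (hgpos k x).le) hgi).mpr ?_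
    have hsupp : Function.support (g k) = Set.univ :=
      Set.eq_univ_of_forall fun x => (hgpos k x).ne'
    rw [hsupp]
    simp
  set Gb : E → ℝ := fun y => g k y / c with hGb_def
  have hGbm : Measurable Gb := (hgmeas k).div_const c
  have hGbnn : ∀ y, 0 ≤ Gb y := fun y => div_nonneg (hgpos k y).le hc.le
  have hGbb : ∀ y, Gb y ≤ Cg / c := fun y => (div_le_div_iff_of_pos_right hc).mpr (hCg y)
  -- formula for the one-step propagator
  have hq : ∀ (h : E → ℝ) (x : E), qhat k (k+1) h x = ∫ y, Gb y * h y ∂(K k x) := by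
    intro h x
    rw [hqstep k (k+1) (Nat.lt_succ_self k) hk1n h x]
    simp only [hqdiag, hGb_def]
    rfl
  -- measurability and boundedness of the propagated function
  have hqm : ∀ (h : E → ℝ), Measurable h → Measurable (qhat k (k+1) h) := by
    intro h hm
    rw [show qhat k (k+1) h = fun x => ∫ y, Gb y * h y ∂(K k x) from funext (hq h)]
    exact measurable_kernel_integral (hKprob k) (hKmeas k) (hGbm.mul hm)
  have hqb : ∀ (h : E → ℝ) (Ch : ℝ), 0 ≤ Ch → (∀ y, |h y| ≤ Ch) →
      ∀ x, |qhat k (k+1) h x| ≤ Cg / c * Ch := by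
    intro h Ch hCh0 hCh x
    rw [hq h x]
    haveI := hKprob k x
    have hb := norm_integral_le_of_norm_le_const (μ := K k x) (f := fun y => Gb y * h y)
      (C := Cg / c * Ch) (Filter.Eventually.of_forall fun y => by
        rw [Real.norm_eq_abs, abs_mul, abs_of_nonneg (hGbnn y)]
        exact mul_le_mul (hGbb y) (hCh y) (abs_nonneg _)
          (le_trans (hGbnn y) (hGbb y)))
    simpa [Real.norm_eq_abs, measure_univ] using hb
  -- |f|^p
  set fp : E → ℝ := fun y => |f y| ^ preal with hfp_def
  have hfpm : Measurable fp := (Real.continuous_rpow_const hp0.le).measurable.comp hfm.abs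
  have hfpnn : ∀ y, 0 ≤ fp y := fun y => Real.rpow_nonneg (abs_nonneg _) _
  have hfpb : ∀ y, |fp y| ≤ Cf ^ preal := fun y => by
    rw [hfp_def, abs_of_nonneg (Real.rpow_nonneg (abs_nonneg _) _)]
    exact Real.rpow_le_rpow (abs_nonneg _) (hCf y) hp0.le
  have hQm : Measurable (qhat k (k+1) f) := hqm f hfm
  have hQpm : Measurable (qhat k (k+1) fp) := hqm fp hfpm
  have hQb : ∀ x, |qhat k (k+1) f x| ≤ Cg / c * Cf := hqb f Cf hCf0 hCf
  have hQpb : ∀ x, |qhat k (k+1) fp x| ≤ Cg / c * Cf ^ preal :=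
    hqb fp (Cf ^ preal) (Real.rpow_nonneg hCf0 _) hfpb
  have hQpnn : ∀ x, 0 ≤ qhat k (k+1) fp x := by
    intro x
    rw [hq fp x]
    exact integral_nonneg fun y => mul_nonneg (hGbnn y) (hfpnn y)
  -- part 1
  have part1 : ∀ i : I k,
      (locNorm (muLoc (μ k) (F k i)) (2*preal) (qhat k (k+1) f)) ^ (2*preal)
        ≤ (mRatio μ F k i) ^ (2*preal) * γ ^ (2*preal - 2) *
            (α * ((succSet p k (k+1) i).sup' (hsne k (k+1) (Nat.lt_succ_self k) hkn i)
                    fun l => (locNorm (muLoc (μ (k+1)) (F (k+1) l)) (2*preal) f) ^ (2*preal))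
             + β * ((succSet p k (k+1) i).sup' (hsne k (k+1) (Nat.lt_succ_self k) hkn i)
                    fun l => (locNorm (muLoc (μ (k+1)) (F (k+1) l)) preal f) ^ (2*preal))) := by
    intro i
    have hμkS : μ k (F k i) ≠ 0 := hposF k k hkn' hkn' i
    have hμk1S : μ (k+1) (F k i) ≠ 0 := hposF (k+1) k hkn' hk1n i
    haveI hνk : IsProbabilityMeasure (muLoc (μ k) (F k i)) :=
      muLoc_prob _ hμkS (measure_ne_top _ _)
    haveI hνk1 : IsProbabilityMeasure (muLoc (μ (k+1)) (F k i)) :=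
      muLoc_prob _ hμk1S (measure_ne_top _ _)
    have ha : 0 < (μ k (F k i)).toReal := ENNReal.toReal_pos hμkS (measure_ne_top _ _)
    have hb : 0 < (μ (k+1) (F k i)).toReal := ENNReal.toReal_pos hμk1S (measure_ne_top _ _)
    have hm : 0 < mRatio μ F k i := div_pos hb ha
    have hγm : (0:ℝ) ≤ γ * mRatio μ F k i := mul_nonneg hγ0.le hm.le
    -- the kernel started in F k i stays in F k i
    have haeK : ∀ x ∈ F k i, ∀ᵐ y ∂(K k x), y ∈ F k i := by
      intro x hx
      have hnull : K k x ((F k i)ᶜ) = 0 := by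
        have hcompl : (F k i)ᶜ ⊆ ⋃ j : I k, (fun j => if j = i then (∅:Set E) else F k j) j := by
          intro y hy
          have : y ∈ ⋃ j : I k, F k j := (hFcover k hkn').symm ▸ Set.mem_univ y
          obtain ⟨j, hj⟩ := Set.mem_iUnion.mp this
          have hji : j ≠ i := fun hh => hy (hh ▸ hj)
          exact Set.mem_iUnion.mpr ⟨j, by simp [if_neg hji, hj]⟩
        refine measure_mono_null hcompl (measure_iUnion_null fun j => ?_)
        by_cases hji : j = i
        · simp [hji]
        · simp only [if_neg hji]
          exact hD k hk1 hkn' j x (fun hxj => Set.disjoint_left.mp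
            (hFdisj k hkn' j i hji) hxj hx)
      rw [Filter.eventually_iff]
      rw [mem_ae_iff]
      simpa using hnull
    have hGbB : ∀ y ∈ F k i, Gb y ≤ γ * mRatio μ F k i := by
      intro y hy
      have h1 := hB k hkn i y hy
      rw [← hc_def] at h1
      have h2 : Gb y ≤ γ / ((μ k (F k i)).toReal / (μ (k+1) (F k i)).toReal) := by
        rw [le_div_iff₀ (div_pos ha hb)]
        calc Gb y * ((μ k (F k i)).toReal / (μ (k+1) (F k i)).toReal)
            = ((μ k (F k i)).toReal / (μ (k+1) (F k i)).toReal) * Gb y := by ring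
          _ ≤ γ := h1
      calc Gb y ≤ γ / ((μ k (F k i)).toReal / (μ (k+1) (F k i)).toReal) := h2
        _ = γ * mRatio μ F k i := by
            rw [mRatio]
            field_simp
    -- the pointwise estimate on F k i
    have e1 : (1 - 1/preal) * (2*preal) = 2*preal - 2 := by field_simp; try ring
    have e2 : 1/preal * (2*preal) = 2 := by field_simp; try ring
    have hpt : ∀ x ∈ F k i, |qhat k (k+1) f x| ^ (2*preal)
        ≤ (γ * mRatio μ F k i) ^ (2*preal - 2) * (qhat k (k+1) fp x) ^ ((2:ℝ)) := by
      intro x hx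
      haveI := hKprob k x
      have habs : |qhat k (k+1) f x| ≤ ∫ y, Gb y * |f y| ∂(K k x) := by
        rw [hq f x]
        calc |∫ y, Gb y * f y ∂(K k x)| = ‖∫ y, Gb y * f y ∂(K k x)‖ :=
              (Real.norm_eq_abs _).symm
          _ ≤ ∫ y, ‖Gb y * f y‖ ∂(K k x) := norm_integral_le_integral_norm _
          _ = ∫ y, Gb y * |f y| ∂(K k x) := by
              refine integral_congr_ae (Filter.Eventually.of_forall fun y => ?_)
              show ‖Gb y * f y‖ = Gb y * |f y|
              rw [Real.norm_eq_abs, abs_mul, abs_of_nonneg (hGbnn y)]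
      have hhold := holder_G hpreal hGbm hGbnn hfm hCf hγm
        ((haeK x hx).mono fun y hy => hGbB y hy)
      have hqfp : ∫ y, Gb y * |f y| ^ preal ∂(K k x) = qhat k (k+1) fp x := (hq fp x).symm
      rw [hqfp] at hhold
      calc |qhat k (k+1) f x| ^ (2*preal)
          ≤ ((γ * mRatio μ F k i) ^ (1 - 1/preal)
              * (qhat k (k+1) fp x) ^ (1/preal)) ^ (2*preal) :=
            Real.rpow_le_rpow (abs_nonneg _) (le_trans habs hhold) h2p0.le
        _ = (γ * mRatio μ F k i) ^ (2*preal - 2) * (qhat k (k+1) fp x) ^ ((2:ℝ)) := by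
            rw [Real.mul_rpow (Real.rpow_nonneg hγm _) (Real.rpow_nonneg (hQpnn x) _),
              ← Real.rpow_mul hγm, ← Real.rpow_mul (hQpnn x), e1, e2]
    -- integrate the pointwise estimate
    have hint1 : Integrable (fun x => |qhat k (k+1) f x| ^ (2*preal)) (muLoc (μ k) (F k i)) :=
      integrable_of_bdd
        ((Real.continuous_rpow_const h2p0.le).measurable.comp hQm.abs).aestronglyMeasurable
        (C := (Cg/c*Cf) ^ (2*preal)) (fun x => by
          rw [abs_of_nonneg (Real.rpow_nonneg (abs_nonneg _) _)]
          exact Real.rpow_le_rpow (abs_nonneg _) (hQb x) h2p0.le)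
    have hint2 : Integrable (fun x => (γ * mRatio μ F k i) ^ (2*preal - 2)
        * (qhat k (k+1) fp x) ^ ((2:ℝ))) (muLoc (μ k) (F k i)) := by
      refine Integrable.const_mul ?_ _
      refine integrable_of_bdd
        ((Real.continuous_rpow_const (by norm_num : (0:ℝ) ≤ 2)).measurable.comp
          hQpm).aestronglyMeasurable
        (C := (Cg/c*Cf ^ preal) ^ ((2:ℝ))) (fun x => by
          rw [abs_of_nonneg (Real.rpow_nonneg (hQpnn x) _)]
          refine Real.rpow_le_rpow (hQpnn x) ?_ (by norm_num)
          exact le_trans (le_abs_self _) (hQpb x))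
    have hmono : ∫ x, |qhat k (k+1) f x| ^ (2*preal) ∂(muLoc (μ k) (F k i))
        ≤ ∫ x, (γ * mRatio μ F k i) ^ (2*preal - 2) * (qhat k (k+1) fp x) ^ ((2:ℝ))
            ∂(muLoc (μ k) (F k i)) :=
      integral_mono_ae hint1 hint2 ((ae_muLoc (hFmeas k i)).mono fun x hx => hpt x hx)
    have hR : ∫ x, (γ * mRatio μ F k i) ^ (2*preal - 2) * (qhat k (k+1) fp x) ^ ((2:ℝ))
          ∂(muLoc (μ k) (F k i))
        = (γ * mRatio μ F k i) ^ (2*preal - 2)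
            * (locNorm (muLoc (μ k) (F k i)) 2 (qhat k (k+1) fp)) ^ (2:ℕ) := by
      have hQeq : ∀ x : E, (qhat k (k+1) fp x) ^ ((2:ℝ)) = |qhat k (k+1) fp x| ^ ((2:ℝ)) :=
        fun x => by rw [abs_of_nonneg (hQpnn x)]
      calc ∫ x, (γ * mRatio μ F k i) ^ (2*preal - 2) * (qhat k (k+1) fp x) ^ ((2:ℝ))
            ∂(muLoc (μ k) (F k i))
          = (γ * mRatio μ F k i) ^ (2*preal - 2)
              * ∫ x, |qhat k (k+1) fp x| ^ ((2:ℝ)) ∂(muLoc (μ k) (F k i)) := by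
            simp_rw [hQeq]
            exact integral_const_mul _ _
        _ = (γ * mRatio μ F k i) ^ (2*preal - 2)
              * (locNorm (muLoc (μ k) (F k i)) 2 (qhat k (k+1) fp)) ^ (2:ℕ) := by
            rw [sq_eq_rpow, locNorm_rpow two_pos]
    -- the local mixing assumption applied to |f|^p
    have hMapp := hM k hk1 hkn i fp hfpm ⟨Cf ^ preal, hfpb⟩
    -- decomposition over the successor sets
    have hsetS : F k i = ⋃ l ∈ succSet p k (k+1) i, F (k+1) l := by
      apply Set.Subset.antisymm
      · intro x hx
        have : x ∈ ⋃ l : I (k+1), F (k+1) l := (hFcover (k+1) hk1n).symm ▸ Set.mem_univ x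
        obtain ⟨l, hl⟩ := Set.mem_iUnion.mp this
        have hpl : p k (k+1) l = i := by
          by_contra hne
          exact Set.disjoint_left.mp (hFdisj k hkn' _ i hne)
            (hp k (k+1) (Nat.lt_succ_self k) hk1n l hl) hx
        exact Set.mem_biUnion (Finset.mem_filter.mpr ⟨Finset.mem_univ l, hpl⟩) hl
      · intro x hx
        obtain ⟨l, hls, hl⟩ := Set.mem_iUnion₂.mp hx
        have hpl : p k (k+1) l = i := by simpa [succSet] using hls
        exact hpl ▸ hp k (k+1) (Nat.lt_succ_self k) hk1n l hl
    have hsup : ∀ r : ℝ, 0 < r →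
        ∫ y, |f y| ^ r ∂(muLoc (μ (k+1)) (F k i))
          ≤ (succSet p k (k+1) i).sup' (hsne k (k+1) (Nat.lt_succ_self k) hkn i)
              (fun l => ∫ y, |f y| ^ r ∂(muLoc (μ (k+1)) (F (k+1) l))) := by
      intro r hr
      rw [hsetS]
      exact muLoc_integral_le_sup (hsne k (k+1) (Nat.lt_succ_self k) hkn i) (hFmeas (k+1))
        (fun l l' hll => hFdisj (k+1) hk1n l l' hll)
        (fun l _ => hposF (k+1) (k+1) hk1n hk1n l)
        ((Real.continuous_rpow_const hr.le).measurable.comp hfm.abs)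
        (fun y => Real.rpow_nonneg (abs_nonneg _) _)
        (C := Cf ^ r) (fun y => by
          rw [abs_of_nonneg (Real.rpow_nonneg (abs_nonneg _) _)]
          exact Real.rpow_le_rpow (abs_nonneg _) (hCf y) hr.le)
    set M2p : ℝ := (succSet p k (k+1) i).sup' (hsne k (k+1) (Nat.lt_succ_self k) hkn i)
        (fun l => (locNorm (muLoc (μ (k+1)) (F (k+1) l)) (2*preal) f) ^ (2*preal)) with hM2p_def
    set Mp : ℝ := (succSet p k (k+1) i).sup' (hsne k (k+1) (Nat.lt_succ_self k) hkn i)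
        (fun l => (locNorm (muLoc (μ (k+1)) (F (k+1) l)) preal f) ^ (2*preal)) with hMp_def
    have hL2 : (locNorm (muLoc (μ (k+1)) (F k i)) 2 fp) ^ (2:ℕ) ≤ M2p := by
      rw [sq_eq_rpow, locNorm_rpow two_pos]
      have heq : ∀ y : E, |fp y| ^ ((2:ℝ)) = |f y| ^ (2*preal) := by
        intro y
        rw [hfp_def, abs_of_nonneg (Real.rpow_nonneg (abs_nonneg _) _),
          ← Real.rpow_mul (abs_nonneg (f y)), mul_comm preal 2]
      calc ∫ y, |fp y| ^ ((2:ℝ)) ∂(muLoc (μ (k+1)) (F k i))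
          = ∫ y, |f y| ^ (2*preal) ∂(muLoc (μ (k+1)) (F k i)) := by
            exact integral_congr_ae (Filter.Eventually.of_forall fun y => heq y)
        _ ≤ (succSet p k (k+1) i).sup' (hsne k (k+1) (Nat.lt_succ_self k) hkn i)
              (fun l => ∫ y, |f y| ^ (2*preal) ∂(muLoc (μ (k+1)) (F (k+1) l))) :=
            hsup (2*preal) h2p0
        _ = M2p := by
            rw [hM2p_def]
            exact Finset.sup'_congr _ rfl (fun l _ => (locNorm_rpow h2p0 f)) |>.symm
    have hLin : (∫ y, fp y ∂(muLoc (μ (k+1)) (F k i))) ^ (2:ℕ) ≤ Mp := by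
      set Sp : ℝ := (succSet p k (k+1) i).sup' (hsne k (k+1) (Nat.lt_succ_self k) hkn i)
          (fun l => ∫ y, |f y| ^ preal ∂(muLoc (μ (k+1)) (F (k+1) l))) with hSp_def
      have h2 : ∫ y, fp y ∂(muLoc (μ (k+1)) (F k i)) ≤ Sp := hsup preal hp0
      have h3 : (∫ y, fp y ∂(muLoc (μ (k+1)) (F k i))) ^ (2:ℕ) ≤ Sp ^ (2:ℕ) :=
        pow_le_pow_left₀ (integral_nonneg fun y => hfpnn y) h2 2
      refine le_trans h3 ?_
      obtain ⟨l₀, hl₀, hEq⟩ := Finset.exists_mem_eq_sup'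
        (hsne k (k+1) (Nat.lt_succ_self k) hkn i)
        (fun l => ∫ y, |f y| ^ preal ∂(muLoc (μ (k+1)) (F (k+1) l)))
      rw [hSp_def, hEq]
      have h5 : (∫ y, |f y| ^ preal ∂(muLoc (μ (k+1)) (F (k+1) l₀))) ^ (2:ℕ)
          = (locNorm (muLoc (μ (k+1)) (F (k+1) l₀)) preal f) ^ (2*preal) := by
        rw [← locNorm_rpow hp0 f, sq_eq_rpow,
          ← Real.rpow_mul (locNorm_nonneg _ _ _), mul_comm preal 2]
      rw [h5, hMp_def]
      exact Finset.le_sup'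
        (fun l => (locNorm (muLoc (μ (k+1)) (F (k+1) l)) preal f) ^ (2*preal)) hl₀
    -- combine all estimates
    have hLHS : (locNorm (muLoc (μ k) (F k i)) (2*preal) (qhat k (k+1) f)) ^ (2*preal)
        = ∫ x, |qhat k (k+1) f x| ^ (2*preal) ∂(muLoc (μ k) (F k i)) :=
      locNorm_rpow h2p0 _
    have hmm : mRatio μ F k i ^ (2*preal - 2) * mRatio μ F k i ^ ((2:ℝ))
        = mRatio μ F k i ^ (2*preal) := by
      rw [← Real.rpow_add hm]
      norm_num
    have hXnn : 0 ≤ α * M2p + β * Mp := by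
      have hM2pnn : 0 ≤ M2p := le_trans (by positivity) hL2
      have hMpnn : 0 ≤ Mp := le_trans (by positivity) hLin
      positivity
    calc (locNorm (muLoc (μ k) (F k i)) (2*preal) (qhat k (k+1) f)) ^ (2*preal)
        = ∫ x, |qhat k (k+1) f x| ^ (2*preal) ∂(muLoc (μ k) (F k i)) := hLHS
      _ ≤ ∫ x, (γ * mRatio μ F k i) ^ (2*preal - 2) * (qhat k (k+1) fp x) ^ ((2:ℝ))
            ∂(muLoc (μ k) (F k i)) := hmono
      _ = (γ * mRatio μ F k i) ^ (2*preal - 2)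
            * (locNorm (muLoc (μ k) (F k i)) 2 (qhat k (k+1) fp)) ^ (2:ℕ) := hR
      _ ≤ (γ * mRatio μ F k i) ^ (2*preal - 2)
            * ((mRatio μ F k i) ^ (2:ℕ)
                * (α * (locNorm (muLoc (μ (k+1)) (F k i)) 2 fp) ^ (2:ℕ)
                  + β * (∫ x, fp x ∂(muLoc (μ (k+1)) (F k i))) ^ (2:ℕ))) :=
          mul_le_mul_of_nonneg_left hMapp (Real.rpow_nonneg hγm _)
      _ ≤ (γ * mRatio μ F k i) ^ (2*preal - 2)
            * ((mRatio μ F k i) ^ (2:ℕ) * (α * M2p + β * Mp)) := by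
          refine mul_le_mul_of_nonneg_left ?_ (Real.rpow_nonneg hγm _)
          refine mul_le_mul_of_nonneg_left ?_ (by positivity)
          exact add_le_add (mul_le_mul_of_nonneg_left hL2 hα.le)
            (mul_le_mul_of_nonneg_left hLin hβ0)
      _ = (mRatio μ F k i) ^ (2*preal) * γ ^ (2*preal - 2) * (α * M2p + β * Mp) := by
          rw [Real.mul_rpow hγ0.le hm.le, sq_eq_rpow (mRatio μ F k i)]
          calc γ ^ (2*preal - 2) * mRatio μ F k i ^ (2*preal - 2)
                * (mRatio μ F k i ^ ((2:ℝ)) * (α * M2p + β * Mp))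
              = (mRatio μ F k i ^ (2*preal - 2) * mRatio μ F k i ^ ((2:ℝ)))
                  * γ ^ (2*preal - 2) * (α * M2p + β * Mp) := by ring
            _ = mRatio μ F k i ^ (2*preal) * γ ^ (2*preal - 2) * (α * M2p + β * Mp) := by
                rw [hmm]
  refine ⟨part1, ?_⟩
  -- part 2
  obtain ⟨i₀, hi₀mem, hi₀⟩ := Finset.exists_mem_eq_sup' (Finset.univ_nonempty (α := I k))
    (fun j : I k => locNorm (muLoc (μ k) (F k j)) (2*preal) (qhat k (k+1) f))
  have hLHS2 : maxNorm μ F k (2*preal) (qhat k (k+1) f) ^ (2*preal)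
      = locNorm (muLoc (μ k) (F k i₀)) (2*preal) (qhat k (k+1) f) ^ (2*preal) := by
    rw [maxNorm, hi₀]
  rw [hLHS2]
  refine le_trans (part1 i₀) ?_
  -- notation
  set A : ℝ := Finset.univ.sup' Finset.univ_nonempty (fun i : I k => mRatio μ F k i) with hA_def
  set X : ℝ := maxNorm μ F (k+1) (2*preal) f ^ (2*preal) with hX_def
  have hmR0 : ∀ i : I k, (0:ℝ) ≤ mRatio μ F k i := fun i =>
    div_nonneg ENNReal.toReal_nonneg ENNReal.toReal_nonneg
  have hA0 : 0 ≤ A := le_trans (hmR0 i₀)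
    (Finset.le_sup' (fun i : I k => mRatio μ F k i) (Finset.mem_univ i₀))
  have hXnn : 0 ≤ X := by
    rw [hX_def, maxNorm]
    refine Real.rpow_nonneg (le_trans (locNorm_nonneg (muLoc (μ (k+1))
      (F (k+1) (Classical.arbitrary (I (k+1))))) (2*preal) f) ?_) _
    exact Finset.le_sup' (fun j : I (k+1) => locNorm (muLoc (μ (k+1)) (F (k+1) j)) (2*preal) f)
      (Finset.mem_univ _)
  have hmle : mRatio μ F k i₀ ^ (2*preal) ≤ A ^ (2*preal) :=
    Real.rpow_le_rpow (hmR0 i₀)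
      (Finset.le_sup' (fun i : I k => mRatio μ F k i) (Finset.mem_univ i₀)) h2p0.le
  -- each local 2p-norm is dominated by the max norm (raised to 2p)
  have h2pN : ∀ l : I (k+1),
      locNorm (muLoc (μ (k+1)) (F (k+1) l)) (2*preal) f ^ (2*preal) ≤ X := by
    intro l
    rw [hX_def, maxNorm]
    exact Real.rpow_le_rpow (locNorm_nonneg _ _ _)
      (Finset.le_sup' (fun j : I (k+1) => locNorm (muLoc (μ (k+1)) (F (k+1) j)) (2*preal) f)
        (Finset.mem_univ l)) h2p0.le
  -- the local p-norm is dominated by the local 2p-norm (probability measures)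
  have hpN : ∀ l : I (k+1),
      locNorm (muLoc (μ (k+1)) (F (k+1) l)) preal f ^ (2*preal) ≤ X := by
    intro l
    haveI : IsProbabilityMeasure (muLoc (μ (k+1)) (F (k+1) l)) :=
      muLoc_prob _ (hposF (k+1) (k+1) hk1n hk1n l) (measure_ne_top _ _)
    set ν := muLoc (μ (k+1)) (F (k+1) l)
    have hkey : locNorm ν preal f ≤ locNorm ν (2*preal) f := by
      have hh := holder_G (p := 2) (B := 1) (Cf := Cf ^ preal) (ν := ν) one_le_two
        measurable_const (fun _ => zero_le_one) hfpm hfpb zero_le_one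
        (Filter.Eventually.of_forall fun _ => le_refl 1)
      simp only [one_mul] at hh
      -- hh : ∫ |fp| ≤ 1 ^ (1 - 1/2) * (∫ |fp|^2) ^ (1/2)
      rw [Real.one_rpow, one_mul] at hh
      have heq1 : ∀ y : E, |fp y| = |f y| ^ preal := fun y => by
        rw [hfp_def, abs_of_nonneg (Real.rpow_nonneg (abs_nonneg _) _)]
      have heq3 : ∀ y : E, (|f y| ^ preal) ^ ((2:ℝ)) = |f y| ^ (2*preal) := fun y => by
        rw [← Real.rpow_mul (abs_nonneg (f y)), mul_comm preal 2]
      simp only [heq1] at hh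
      simp only [heq3] at hh
      -- hh : ∫ |f|^p ≤ (∫ |f|^{2p}) ^ (1/2)
      have hnn : (0:ℝ) ≤ ∫ y, |f y| ^ preal ∂ν :=
        integral_nonneg fun y => Real.rpow_nonneg (abs_nonneg _) _
      have hnn2 : (0:ℝ) ≤ ∫ y, |f y| ^ (2*preal) ∂ν :=
        integral_nonneg fun y => Real.rpow_nonneg (abs_nonneg _) _
      calc locNorm ν preal f = (∫ y, |f y| ^ preal ∂ν) ^ (1/preal) := rfl
        _ ≤ ((∫ y, |f y| ^ (2*preal) ∂ν) ^ ((1:ℝ)/2)) ^ (1/preal) :=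
            Real.rpow_le_rpow hnn hh (by positivity)
        _ = (∫ y, |f y| ^ (2*preal) ∂ν) ^ (1/(2*preal)) := by
            rw [← Real.rpow_mul hnn2]
            congr 1
            field_simp
        _ = locNorm ν (2*preal) f := rfl
    exact le_trans (Real.rpow_le_rpow (locNorm_nonneg _ _ _) hkey h2p0.le) (h2pN l)
  have hsupM2p : (succSet p k (k+1) i₀).sup' (hsne k (k+1) (Nat.lt_succ_self k) hkn i₀)
      (fun l => (locNorm (muLoc (μ (k+1)) (F (k+1) l)) (2*preal) f) ^ (2*preal)) ≤ X :=
    Finset.sup'_le _ _ fun l _ => h2pN l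
  have hsupMp : (succSet p k (k+1) i₀).sup' (hsne k (k+1) (Nat.lt_succ_self k) hkn i₀)
      (fun l => (locNorm (muLoc (μ (k+1)) (F (k+1) l)) preal f) ^ (2*preal)) ≤ X :=
    Finset.sup'_le _ _ fun l _ => hpN l
  have hXnn' : 0 ≤ (succSet p k (k+1) i₀).sup' (hsne k (k+1) (Nat.lt_succ_self k) hkn i₀)
      (fun l => (locNorm (muLoc (μ (k+1)) (F (k+1) l)) (2*preal) f) ^ (2*preal)) := by
    obtain ⟨l₀, hl₀⟩ := hsne k (k+1) (Nat.lt_succ_self k) hkn i₀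
    exact le_trans (Real.rpow_nonneg (locNorm_nonneg _ _ _) _)
      (Finset.le_sup' (fun l => (locNorm (muLoc (μ (k+1)) (F (k+1) l)) (2*preal) f) ^ (2*preal))
        hl₀)
  have hXnn'' : 0 ≤ (succSet p k (k+1) i₀).sup' (hsne k (k+1) (Nat.lt_succ_self k) hkn i₀)
      (fun l => (locNorm (muLoc (μ (k+1)) (F (k+1) l)) preal f) ^ (2*preal)) := by
    obtain ⟨l₀, hl₀⟩ := hsne k (k+1) (Nat.lt_succ_self k) hkn i₀
    exact le_trans (Real.rpow_nonneg (locNorm_nonneg _ _ _) _)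
      (Finset.le_sup' (fun l => (locNorm (muLoc (μ (k+1)) (F (k+1) l)) preal f) ^ (2*preal))
        hl₀)
  calc mRatio μ F k i₀ ^ (2*preal) * γ ^ (2*preal - 2)
        * (α * ((succSet p k (k+1) i₀).sup' (hsne k (k+1) (Nat.lt_succ_self k) hkn i₀)
            (fun l => (locNorm (muLoc (μ (k+1)) (F (k+1) l)) (2*preal) f) ^ (2*preal)))
          + β * ((succSet p k (k+1) i₀).sup' (hsne k (k+1) (Nat.lt_succ_self k) hkn i₀)
            (fun l => (locNorm (muLoc (μ (k+1)) (F (k+1) l)) preal f) ^ (2*preal))))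
      ≤ A ^ (2*preal) * γ ^ (2*preal - 2) * ((α + β) * X) := by
        refine mul_le_mul ?_ ?_ ?_ ?_
        · exact mul_le_mul_of_nonneg_right hmle (Real.rpow_nonneg hγ0.le _)
        · calc α * _ + β * _ ≤ α * X + β * X :=
                add_le_add (mul_le_mul_of_nonneg_left hsupM2p hα.le)
                  (mul_le_mul_of_nonneg_left hsupMp hβ0)
            _ = (α + β) * X := by ring
        · positivity
        · positivity
    _ = A ^ (2*preal) * γ ^ (2*preal - 2) * (α + β) * X := by ring
end
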